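/- arXiv:1601.02896 — 5 statements merged into one kernel-verified Lean document; each statement's English description precedes it below -/
import Mathlib

section
/- In the reduced k-th power G^(k), the degree of the vertex a_1^{n_1} a_2^{n_2} ⋯ a_v^{n_v} equals the sum of deg_G(a_i) over all indices i with n_i ≥ 1. -/
open Finset
open scoped Classical

variable {V W : Type*}

/-- The reduced `k`-th power of a graph `G`: vertices are size-`k` multisets
(degree-`k` monic monomials) of vertices of `G`; `a·f` is adjacent to `b·f`
whenever `ab ∈ E(G)` and `f` is a degree-`(k-1)` monomial. -/
def reducedPow (G : SimpleGraph V) (k : ℕ) : SimpleGraph (Sym V k) :=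
  SimpleGraph.fromRel (fun m m' => ∃ a b : V, G.Adj a b ∧
    ∃ f : Multiset V, (m : Multiset V) = a ::ₘ f ∧ (m' : Multiset V) = b ::ₘ f)

/-- In the reduced `k`-th power `G^(k)`, the degree of the vertex
`a_1^{n_1} ⋯ a_v^{n_v}` is the sum of `deg_G(a_i)` over all `i` with `n_i ≥ 1`. -/
theorem stmt_2 [Fintype V] [DecidableEq V] (G : SimpleGraph V) [DecidableRel G.Adj]
    (k : ℕ) (m : Sym V k) :
    ((reducedPow G k).neighborSet m).ncard =
      ∑ a ∈ (m : Multiset V).toFinset, G.degree a := by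
  classical
  have hm : (m : Multiset V).card = k := m.2
  set M : Multiset V := (m : Multiset V) with hM
  have hcard : ∀ p : Σ _ : V, V, p.1 ∈ M →
      (p.2 ::ₘ M.erase p.1).card = k := by
    intro p h
    have hk : 0 < k := by
      rw [← hm]; exact Multiset.card_pos.2 (fun h0 => by simp [h0] at h)
    rw [Multiset.card_cons, Multiset.card_erase_of_mem h, hm]
    exact Nat.succ_pred_eq_of_pos hk
  let φ : (Σ _ : V, V) → Sym V k := fun p =>
    if h : p.1 ∈ M then ⟨p.2 ::ₘ M.erase p.1, hcard p h⟩ else m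
  set S : Finset (Σ _ : V, V) := M.toFinset.sigma (fun a => G.neighborFinset a)
    with hS
  have hmemS : ∀ p : Σ _ : V, V, p ∈ S ↔ p.1 ∈ M ∧ G.Adj p.1 p.2 := by
    intro p
    simp [hS, Finset.mem_sigma, Multiset.mem_toFinset]
  have himg : φ '' ↑S = (reducedPow G k).neighborSet m := by
    ext m'
    constructor
    · rintro ⟨⟨a, b⟩, hp, rfl⟩
      obtain ⟨ha, hab⟩ := (hmemS _).1 hp
      have hφ : (φ ⟨a, b⟩ : Multiset V) = b ::ₘ M.erase a := by
        simp only [φ, (show a ∈ M from ha), ↓reduceDIte]; rfl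
      refine ⟨?_, Or.inl ⟨a, b, hab, M.erase a, (Multiset.cons_erase ha).symm, hφ⟩⟩
      intro hEq
      apply G.ne_of_adj hab
      have : (a ::ₘ M.erase a : Multiset V) = b ::ₘ M.erase a := by
        rw [Multiset.cons_erase ha, ← hφ, ← hEq]
      exact ((Multiset.cons_inj_left _).1 this.symm).symm
    · intro hm'
      obtain ⟨hne, habs⟩ := hm'
      have : ∃ a b : V, G.Adj a b ∧ ∃ f : Multiset V,
          M = a ::ₘ f ∧ (m' : Multiset V) = b ::ₘ f := by
        rcases habs with ⟨a, b, hab, f, h1, h2⟩ | ⟨a, b, hab, f, h1, h2⟩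
        · exact ⟨a, b, hab, f, h1, h2⟩
        · exact ⟨b, a, hab.symm, f, h2, h1⟩
      obtain ⟨a, b, hab, f, h1, h2⟩ := this
      have ha : a ∈ M := by rw [h1]; exact Multiset.mem_cons_self _ _
      refine ⟨⟨a, b⟩, (hmemS _).2 ⟨ha, hab⟩, ?_⟩
      have hf : M.erase a = f := by rw [h1, Multiset.erase_cons_head]
      apply Subtype.ext
      simp only [φ, (show a ∈ M from ha), ↓reduceDIte]
      change b ::ₘ M.erase a = (m' : Multiset V)
      rw [hf]; exact h2.symm
  have hinj : Set.InjOn φ ↑S := by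
    rintro ⟨a, b⟩ hp ⟨a', b'⟩ hq hEq
    obtain ⟨ha, hab⟩ := (hmemS _).1 (Finset.mem_coe.1 hp)
    obtain ⟨ha', hab'⟩ := (hmemS _).1 (Finset.mem_coe.1 hq)
    have hE : (b ::ₘ M.erase a : Multiset V) = b' ::ₘ M.erase a' := by
      have := congrArg (fun x : Sym V k => (x : Multiset V)) hEq
      simp only [φ, (show a ∈ M from ha), (show a' ∈ M from ha'), ↓reduceDIte] at this; exact this
    have haa : a = a' := by
      by_contra hne
      have hc := congrArg (Multiset.count a) hE
      have hba : b ≠ a := (G.ne_of_adj hab).symm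
      have hcount : 0 < M.count a := Multiset.count_pos.2 ha
      rw [Multiset.count_cons_of_ne (Ne.symm hba),
        Multiset.count_erase_self] at hc
      rw [Multiset.count_cons, Multiset.count_erase_of_ne hne] at hc
      by_cases hb' : a = b' <;> simp [hb'] at hc <;> omega
    subst haa
    have hbb : b = b' := (Multiset.cons_inj_left _).1 hE
    subst hbb
    rfl
  rw [← himg, Set.ncard_image_of_injOn hinj, Set.ncard_coe_finset, hS,
    Finset.card_sigma]
  rfl
end

section
/- Let G be a connected graph. The natural projection η: G^k → G^(k), sending a k-tuple to its S_k-orbit, induces a surjective linear map η*: C(G^k) → C(G^(k)) on cycle spaces over F_2. -/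
open Finset
open scoped Classical

variable {V W : Type*}

/-- The `k`-fold Cartesian power of a graph. -/
def cartPow (G : SimpleGraph V) (k : ℕ) : SimpleGraph (Fin k → V) :=
  SimpleGraph.fromRel (fun x y => ∃ i, G.Adj (x i) (y i) ∧ ∀ j, j ≠ i → x j = y j)

/-- The quotient map `G^k → G^(k)` sending a tuple to its multiset of coordinates. -/
def symOfTuple (k : ℕ) (x : Fin k → V) : Sym V k :=
  ⟨(List.ofFn x : List V), by simp⟩

/-- The edge space of `G` over `𝔽₂`: functions on `Sym2 V` supported on edges. -/
def edgeSpace (G : SimpleGraph V) : Submodule (ZMod 2) (Sym2 V → ZMod 2) where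
  carrier := {x | ∀ e, e ∉ G.edgeSet → x e = 0}
  add_mem' := by intro a b ha hb e he; simp [ha e he, hb e he]
  zero_mem' := by intro e he; rfl
  smul_mem' := by intro c x hx e he; simp [hx e he]

/-- The boundary map `δ` from the edge space to the vertex space over `𝔽₂`. -/
noncomputable def boundaryMap (G : SimpleGraph V) [Fintype V] :
    (Sym2 V → ZMod 2) →ₗ[ZMod 2] (V → ZMod 2) where
  toFun x v := ∑ e ∈ G.edgeFinset, if v ∈ e then x e else 0
  map_add' x y := by
    funext v
    try dsimp only
    rw [Pi.add_apply, ← Finset.sum_add_distrib]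
    exact Finset.sum_congr rfl (fun e _ => by split <;> simp)
  map_smul' c x := by
    funext v
    try dsimp only
    rw [RingHom.id_apply, Pi.smul_apply, smul_eq_mul, Finset.mul_sum]
    exact Finset.sum_congr rfl (fun e _ => by split <;> simp)

/-- The cycle space of `G` over `𝔽₂`: elements of the edge space with zero boundary. -/
noncomputable def cycleSpace (G : SimpleGraph V) [Fintype V] :
    Submodule (ZMod 2) (Sym2 V → ZMod 2) :=
  edgeSpace G ⊓ LinearMap.ker (boundaryMap G)

/-- The linear map on edge spaces induced by a vertex map `φ` (a weak homomorphism):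
an edge maps to its image if the image is a genuine edge, and to `0` if it collapses. -/
noncomputable def inducedMap (φ : V → W) [Fintype V] :
    (Sym2 V → ZMod 2) →ₗ[ZMod 2] (Sym2 W → ZMod 2) where
  toFun x e' := if e'.IsDiag then 0 else ∑ e : Sym2 V, if Sym2.map φ e = e' then x e else 0
  map_add' x y := by
    funext e'
    try dsimp only
    by_cases h : e'.IsDiag
    · simp [h]
    · rw [Pi.add_apply, if_neg h, if_neg h, if_neg h, ← Finset.sum_add_distrib]
      exact Finset.sum_congr rfl (fun e _ => by split <;> simp)
  map_smul' c x := by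
    funext e'
    try dsimp only
    by_cases h : e'.IsDiag
    · simp [h]
    · rw [RingHom.id_apply, Pi.smul_apply, smul_eq_mul, if_neg h, if_neg h, Finset.mul_sum]
      exact Finset.sum_congr rfl (fun e _ => by split <;> simp)

section AuxChains

variable {α β γ : Type*}

noncomputable def echain (e : Sym2 α) : Sym2 α → ZMod 2 := fun e' => if e' = e then 1 else 0

noncomputable def vind (v : α) : α → ZMod 2 := fun w => if w = v then 1 else 0

lemma zmod2_addself : ∀ x : ZMod 2, x + x = 0 := by decide

lemma fun_addself (f : α → ZMod 2) : f + f = 0 := funext fun w => zmod2_addself (f w)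

lemma mem_edgeSpace {G : SimpleGraph α} {x : Sym2 α → ZMod 2} :
    x ∈ edgeSpace G ↔ ∀ e, e ∉ G.edgeSet → x e = 0 := Iff.rfl

lemma boundaryMap_apply [Fintype α] (G : SimpleGraph α) (x : Sym2 α → ZMod 2) (w : α) :
    boundaryMap G x w = ∑ e ∈ G.edgeFinset, if w ∈ e then x e else 0 := rfl

lemma inducedMap_apply [Fintype α] (φ : α → β) (x : Sym2 α → ZMod 2) (e' : Sym2 β) :
    inducedMap φ x e' =
      if e'.IsDiag then 0 else ∑ e : Sym2 α, if Sym2.map φ e = e' then x e else 0 := rfl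

lemma echain_mem_edgeSpace {G : SimpleGraph α} {e : Sym2 α} (he : e ∈ G.edgeSet) :
    echain e ∈ edgeSpace G := by
  intro e' he'
  exact if_neg (by rintro rfl; exact he' he)

lemma boundaryMap_echain [Fintype α] {G : SimpleGraph α} {u v : α} (h : G.Adj u v) :
    boundaryMap G (echain s(u, v)) = vind u + vind v := by
  funext w
  rw [boundaryMap_apply]
  have : ∀ e ∈ G.edgeFinset, (if w ∈ e then echain s(u,v) e else 0) =
      (if e = s(u,v) then (if w ∈ s(u,v) then (1 : ZMod 2) else 0) else 0) := by
    intro e _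
    by_cases he : e = s(u,v)
    · subst he; simp [echain]
    · simp [echain, he]
  rw [Finset.sum_congr rfl this, Finset.sum_ite_eq' G.edgeFinset s(u,v)]
  rw [if_pos (SimpleGraph.mem_edgeFinset.mpr h)]
  have huv : u ≠ v := h.ne
  by_cases h1 : w = u <;> by_cases h2 : w = v <;>
    simp_all [Sym2.mem_iff, vind, Pi.add_apply]

lemma inducedMap_echain [Fintype α] (φ : α → β) (e : Sym2 α) :
    inducedMap φ (echain e) =
      fun e'' => if ¬ e''.IsDiag ∧ Sym2.map φ e = e'' then 1 else 0 := by
  funext e''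
  rw [inducedMap_apply]
  by_cases h : e''.IsDiag
  · simp [h]
  · rw [if_neg h]
    have : ∀ e0 ∈ (Finset.univ : Finset (Sym2 α)),
        (if Sym2.map φ e0 = e'' then echain e e0 else 0) =
        (if e0 = e then (if Sym2.map φ e0 = e'' then (1 : ZMod 2) else 0) else 0) := by
      intro e0 _
      by_cases he : e0 = e
      · subst he; simp [echain]
      · simp [echain, he]
    rw [Finset.sum_congr rfl this, Finset.sum_ite_eq' Finset.univ e]
    simp [h]

lemma inducedMap_echain_congr [Fintype α] (φ : α → β) {e1 e2 : Sym2 α}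
    (h : Sym2.map φ e1 = Sym2.map φ e2) :
    inducedMap φ (echain e1) = inducedMap φ (echain e2) := by
  rw [inducedMap_echain, inducedMap_echain, h]

lemma inducedMap_echain_nondiag [Fintype α] (φ : α → β) {e : Sym2 α}
    (h : ¬ (Sym2.map φ e).IsDiag) :
    inducedMap φ (echain e) = echain (Sym2.map φ e) := by
  rw [inducedMap_echain]
  funext e''
  by_cases he : e'' = Sym2.map φ e
  · subst he; simp [echain, h]
  · simp only [echain, if_neg he]
    rw [if_neg]
    rintro ⟨-, h2⟩
    exact he h2.symm

noncomputable def walkChain {G : SimpleGraph α} : ∀ {a b : α}, G.Walk a b → (Sym2 α → ZMod 2)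
  | _, _, .nil => 0
  | _, _, .cons (u := a) (v := c) _ p => echain s(a, c) + walkChain p

lemma walkChain_mem_edgeSpace {G : SimpleGraph α} : ∀ {a b : α} (p : G.Walk a b),
    walkChain p ∈ edgeSpace G
  | _, _, .nil => (edgeSpace G).zero_mem
  | _, _, .cons h p =>
      (edgeSpace G).add_mem (echain_mem_edgeSpace h) (walkChain_mem_edgeSpace p)

lemma boundaryMap_walkChain [Fintype α] {G : SimpleGraph α} :
    ∀ {a b : α} (p : G.Walk a b), boundaryMap G (walkChain p) = vind a + vind b
  | a, _, .nil => by
      show boundaryMap G 0 = _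
      rw [map_zero, (fun_addself (vind a)).symm]
  | a, b, .cons (v := c) h p => by
      show boundaryMap G (echain s(a,c) + walkChain p) = _
      rw [map_add, boundaryMap_echain h, boundaryMap_walkChain p]
      funext w
      have : ∀ x z y : ZMod 2, x + z + (z + y) = x + y := by decide
      simpa using this (vind a w) (vind c w) (vind b w)

lemma inducedMap_walkChain_congr [Fintype α] [Fintype β] {G : SimpleGraph α}
    {H : SimpleGraph β} (F1 F2 : G →g H) (φ : β → γ) (hφ : ∀ x, φ (F1 x) = φ (F2 x)) :
    ∀ {a b : α} (p : G.Walk a b),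
      inducedMap φ (walkChain (p.map F1)) = inducedMap φ (walkChain (p.map F2))
  | _, _, .nil => rfl
  | a, b, .cons (v := c) h p => by
      show inducedMap φ (echain s(F1 a, F1 c) + walkChain ((p.map F1)))
          = inducedMap φ (echain s(F2 a, F2 c) + walkChain ((p.map F2)))
      have hcongr : inducedMap φ (echain s(F1 a, F1 c)) = inducedMap φ (echain s(F2 a, F2 c)) :=
        inducedMap_echain_congr φ
          (by rw [Sym2.map_pair_eq, Sym2.map_pair_eq, hφ, hφ])
      rw [map_add, map_add, inducedMap_walkChain_congr F1 F2 φ hφ p, hcongr]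

end AuxChains

section Eta

variable [Fintype V] [DecidableEq V] {G : SimpleGraph V} {k : ℕ}

lemma boundaryMap_apply' {α : Type*} [Fintype α] [DecidableEq α] (G : SimpleGraph α)
    (x : Sym2 α → ZMod 2) (w : α) :
    boundaryMap G x w = ∑ e ∈ G.edgeFinset, if w ∈ e then x e else 0 := by
  rw [boundaryMap_apply]
  exact Finset.sum_congr rfl (fun e _ => by by_cases h : w ∈ e <;> simp [h])

lemma inducedMap_apply' {α β : Type*} (φ : α → β) [Fintype α] [DecidableEq β]
    (x : Sym2 α → ZMod 2) (e' : Sym2 β) :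
    inducedMap φ x e' =
      if e'.IsDiag then 0 else ∑ e : Sym2 α, if Sym2.map φ e = e' then x e else 0 := by
  rw [inducedMap_apply]
  by_cases h : e'.IsDiag
  · simp [h]
  · simp only [if_neg h]
    exact Finset.sum_congr rfl (fun e _ => by by_cases hh : Sym2.map φ e = e' <;> simp [hh])

lemma symOfTuple_coe (u : Fin k → V) :
    (symOfTuple k u : Multiset V) = Multiset.map u Finset.univ.val :=
  (Fin.univ_val_map u).symm

lemma symOfTuple_comp_perm (u : Fin k → V) (σ : Equiv.Perm (Fin k)) :
    symOfTuple k (u ∘ σ) = symOfTuple k u :=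
  Subtype.ext (Multiset.coe_eq_coe.mpr (σ.ofFn_comp_perm u))

lemma exists_perm_of_symOfTuple_eq {u v : Fin k → V} (h : symOfTuple k u = symOfTuple k v) :
    ∃ σ : Equiv.Perm (Fin k), v = u ∘ σ := by
  letI : LinearOrder V := LinearOrder.lift' (Fintype.equivFin V) (Fintype.equivFin V).injective
  have hperm : List.Perm (List.ofFn u) (List.ofFn v) :=
    Multiset.coe_eq_coe.mp (congrArg (fun s : Sym V k => (s : Multiset V)) h)
  have h1 : List.Perm (List.ofFn (u ∘ Tuple.sort u)) (List.ofFn (v ∘ Tuple.sort v)) :=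
    ((Tuple.sort u).ofFn_comp_perm u).trans (hperm.trans ((Tuple.sort v).ofFn_comp_perm v).symm)
  have h2 : u ∘ Tuple.sort u = v ∘ Tuple.sort v :=
    List.ofFn_injective (List.Perm.eq_of_sortedLE
      (Tuple.monotone_sort u).sortedLE_ofFn (Tuple.monotone_sort v).sortedLE_ofFn h1)
  refine ⟨Tuple.sort u * (Tuple.sort v)⁻¹, funext fun x => ?_⟩
  calc v x = v (Tuple.sort v ((Tuple.sort v)⁻¹ x)) := by rw [Equiv.Perm.inv_def, Equiv.apply_symm_apply]
    _ = u (Tuple.sort u ((Tuple.sort v)⁻¹ x)) := (congrFun h2 _).symm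
    _ = (u ∘ (Tuple.sort u * (Tuple.sort v)⁻¹)) x := rfl

lemma finset_val_cons {n : ℕ} (s : Finset (Fin n)) (i : Fin n) (hi : i ∈ s) :
    s.val = i ::ₘ (s.erase i).val := by
  rw [Finset.erase_val, Multiset.cons_erase (Finset.mem_val.mpr hi)]

lemma reducedPow_adj_of (u v : Fin k → V) (i : Fin k)
    (ha : G.Adj (u i) (v i)) (heq : ∀ j, j ≠ i → u j = v j) :
    (reducedPow G k).Adj (symOfTuple k u) (symOfTuple k v) := by
  have hdec : ∀ w : Fin k → V, (symOfTuple k w : Multiset V)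
      = w i ::ₘ Multiset.map w ((Finset.univ.erase i)).val := by
    intro w
    rw [symOfTuple_coe, finset_val_cons Finset.univ i (Finset.mem_univ i), Multiset.map_cons]
  have hmapeq : Multiset.map u (Finset.univ.erase i).val
      = Multiset.map v (Finset.univ.erase i).val :=
    Multiset.map_congr rfl (fun j hj => heq j (Finset.mem_erase.mp (Finset.mem_val.mp hj)).1)
  simp only [reducedPow, SimpleGraph.fromRel_adj]
  constructor
  · intro hc
    have hcc : (symOfTuple k u : Multiset V) = (symOfTuple k v : Multiset V) := by rw [hc]
    rw [hdec u, hdec v, hmapeq, Multiset.cons_inj_left] at hcc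
    exact ha.ne hcc
  · exact Or.inl ⟨u i, v i, ha, Multiset.map u (Finset.univ.erase i).val,
      hdec u, by rw [hdec v, hmapeq]⟩

lemma eta_adj {u v : Fin k → V} (h : (cartPow G k).Adj u v) :
    (reducedPow G k).Adj (symOfTuple k u) (symOfTuple k v) := by
  simp only [cartPow, SimpleGraph.fromRel_adj] at h
  obtain ⟨hne, ⟨i, ha, he⟩ | ⟨i, ha, he⟩⟩ := h
  · exact reducedPow_adj_of u v i ha he
  · exact (reducedPow_adj_of v u i ha he).symm

lemma eta_edge_mem {e : Sym2 (Fin k → V)} (he : e ∈ (cartPow G k).edgeFinset) :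
    Sym2.map (symOfTuple k) e ∈ (reducedPow G k).edgeFinset := by
  induction e using Sym2.ind with
  | _ u w =>
    rw [Sym2.map_pair_eq]
    exact SimpleGraph.mem_edgeFinset.mpr (eta_adj (SimpleGraph.mem_edgeFinset.mp he))

lemma symOfTuple_update (u : Fin k → V) {i j : Fin k} (hij : i ≠ j) (c : V) :
    symOfTuple k (Function.update u j c)
      = symOfTuple k (Function.update (Function.update u j (u i)) i c) := by
  apply Sym.coe_injective
  have hj : j ∈ Finset.univ.erase i := Finset.mem_erase.mpr ⟨hij.symm, Finset.mem_univ j⟩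
  have h1 : (Finset.univ : Finset (Fin k)).val = i ::ₘ (Finset.univ.erase i).val :=
    finset_val_cons _ i (Finset.mem_univ i)
  have h2 : (Finset.univ.erase i).val = j ::ₘ ((Finset.univ.erase i).erase j).val :=
    finset_val_cons _ j hj
  have hrest : ∀ l, l ∈ ((Finset.univ.erase i).erase j).val → l ≠ i ∧ l ≠ j := by
    intro l hl
    have := Finset.mem_erase.mp (Finset.mem_val.mp hl)
    exact ⟨(Finset.mem_erase.mp this.2).1, this.1⟩
  rw [symOfTuple_coe, symOfTuple_coe, h1, h2, Multiset.map_cons, Multiset.map_cons,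
    Multiset.map_cons, Multiset.map_cons]
  rw [Function.update_of_ne hij, Function.update_self, Function.update_self,
    Function.update_of_ne hij.symm, Function.update_self]
  have hmapL : Multiset.map (Function.update u j c) ((Finset.univ.erase i).erase j).val
      = Multiset.map u ((Finset.univ.erase i).erase j).val :=
    Multiset.map_congr rfl (fun l hl => by rw [Function.update_of_ne (hrest l hl).2])
  have hmapR : Multiset.map (Function.update (Function.update u j (u i)) i c)
        ((Finset.univ.erase i).erase j).val
      = Multiset.map u ((Finset.univ.erase i).erase j).val :=
    Multiset.map_congr rfl (fun l hl => by
      rw [Function.update_of_ne (hrest l hl).1, Function.update_of_ne (hrest l hl).2])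
  rw [hmapL, hmapR]
  exact Multiset.cons_swap _ _ _

lemma boundary_inducedMap_eq (x : Sym2 (Fin k → V) → ZMod 2)
    (hx : x ∈ edgeSpace (cartPow G k)) (m : Sym V k) :
    boundaryMap (reducedPow G k) (inducedMap (symOfTuple k) x) m
      = ∑ v ∈ Finset.univ.filter (fun v => symOfTuple k v = m),
          boundaryMap (cartPow G k) x v := by
  rw [boundaryMap_apply']
  have step1 : ∀ e' ∈ (reducedPow G k).edgeFinset,
      (if m ∈ e' then inducedMap (symOfTuple k) x e' else 0)
      = ∑ e : Sym2 (Fin k → V),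
          (if Sym2.map (symOfTuple k) e = e' ∧ m ∈ e' then x e else 0) := by
    intro e' he'
    have hd : ¬ e'.IsDiag :=
      (reducedPow G k).not_isDiag_of_mem_edgeSet (SimpleGraph.mem_edgeFinset.mp he')
    by_cases hm : m ∈ e'
    · rw [if_pos hm, inducedMap_apply', if_neg hd]
      exact Finset.sum_congr rfl (fun e _ => by
        by_cases hh : Sym2.map (symOfTuple k) e = e' <;> simp [hh, hm])
    · rw [if_neg hm]
      exact (Finset.sum_eq_zero (fun e _ => by simp [hm])).symm
  rw [Finset.sum_congr rfl step1, Finset.sum_comm]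
  have step2 : ∀ e ∈ (Finset.univ : Finset (Sym2 (Fin k → V))),
      (∑ e' ∈ (reducedPow G k).edgeFinset,
        if Sym2.map (symOfTuple k) e = e' ∧ m ∈ e' then x e else 0)
      = (if e ∈ (cartPow G k).edgeFinset ∧ m ∈ Sym2.map (symOfTuple k) e
          then x e else 0) := by
    intro e _
    have hcomm : ∀ e' ∈ (reducedPow G k).edgeFinset,
        (if Sym2.map (symOfTuple k) e = e' ∧ m ∈ e' then x e else 0)
        = (if Sym2.map (symOfTuple k) e = e'
            then (if m ∈ Sym2.map (symOfTuple k) e then x e else 0) else 0) := by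
      intro e' _
      by_cases hh : Sym2.map (symOfTuple k) e = e'
      · subst hh; simp
      · simp [hh]
    rw [Finset.sum_congr rfl hcomm, Finset.sum_ite_eq]
    by_cases hE : e ∈ (cartPow G k).edgeFinset
    · rw [if_pos (eta_edge_mem hE)]
      simp [hE]
    · have hx0 : x e = 0 := hx e (fun hc => hE (SimpleGraph.mem_edgeFinset.mpr hc))
      simp [hx0]
  rw [Finset.sum_congr rfl step2]
  have step3 : (∑ e ∈ (Finset.univ : Finset (Sym2 (Fin k → V))),
      if e ∈ (cartPow G k).edgeFinset ∧ m ∈ Sym2.map (symOfTuple k) e then x e else 0)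
      = ∑ e ∈ (cartPow G k).edgeFinset,
          (if m ∈ Sym2.map (symOfTuple k) e then x e else 0) := by
    rw [← Finset.sum_subset (Finset.subset_univ (cartPow G k).edgeFinset)
      (fun e _ he => by simp [he])]
    exact Finset.sum_congr rfl (fun e he => by simp [he])
  rw [step3]
  have rhs : ∑ v ∈ Finset.univ.filter (fun v => symOfTuple k v = m),
      boundaryMap (cartPow G k) x v
      = ∑ e ∈ (cartPow G k).edgeFinset,
          ∑ v ∈ Finset.univ.filter (fun v => symOfTuple k v = m),
            (if v ∈ e then x e else 0) := by
    rw [← Finset.sum_comm]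
    exact Finset.sum_congr rfl (fun v _ => boundaryMap_apply' _ _ _)
  rw [rhs]
  refine Finset.sum_congr rfl (fun e he => ?_)
  induction e using Sym2.ind with
  | _ u w =>
    have hadj : (cartPow G k).Adj u w := SimpleGraph.mem_edgeFinset.mp he
    have hne : symOfTuple k u ≠ symOfTuple k w := (eta_adj hadj).ne
    rw [Sym2.map_pair_eq]
    have hsplit : ∀ v ∈ Finset.univ.filter (fun v => symOfTuple k v = m),
        (if v ∈ s(u,w) then x s(u,w) else 0)
        = (if v = u then x s(u,w) else 0) + (if v = w then x s(u,w) else 0) := by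
      intro v _
      by_cases h1 : v = u <;> by_cases h2 : v = w
      · exact absurd (h1.symm.trans h2) hadj.ne
      · subst h1; simp [Sym2.mem_iff, h2]
      · subst h2; simp [Sym2.mem_iff, h1]
      · simp [Sym2.mem_iff, h1, h2]
    rw [Finset.sum_congr rfl hsplit, Finset.sum_add_distrib,
      Finset.sum_ite_eq', Finset.sum_ite_eq']
    simp only [Finset.mem_filter, Finset.mem_univ, true_and]
    by_cases h1 : symOfTuple k u = m <;> by_cases h2 : symOfTuple k w = m
    · exact absurd (h1.trans h2.symm) hne
    · rw [if_pos (Sym2.mem_iff.mpr (Or.inl h1.symm)), if_pos h1, if_neg h2, add_zero]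
    · rw [if_pos (Sym2.mem_iff.mpr (Or.inr h2.symm)), if_neg h1, if_pos h2, zero_add]
    · rw [if_neg (fun hm => by
        rcases Sym2.mem_iff.mp hm with hh | hh
        · exact h1 hh.symm
        · exact h2 hh.symm), if_neg h1, if_neg h2, add_zero]

end Eta

section Main

variable [Fintype V] [DecidableEq V] {G : SimpleGraph V} {k : ℕ}

lemma zmod2_aux1 : ∀ x z y : ZMod 2, (z + x) + (z + y) = x + y := by decide

lemma zmod2_aux1' : ∀ x z y : ZMod 2, (x + z) + (z + y) = x + y := by decide

lemma zmod2_aux2 : ∀ p q r : ZMod 2, (p + q + r) + (q + r) = p := by decide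

lemma zmod2_one : ∀ x : ZMod 2, x ≠ 0 → x = 1 := by decide

lemma inducedMap_mem_edgeSpace (x : Sym2 (Fin k → V) → ZMod 2)
    (hx : x ∈ edgeSpace (cartPow G k)) :
    inducedMap (symOfTuple k) x ∈ edgeSpace (reducedPow G k) := by
  intro e' he'
  rw [inducedMap_apply']
  by_cases hd : e'.IsDiag
  · rw [if_pos hd]
  · rw [if_neg hd]
    refine Finset.sum_eq_zero (fun e _ => ?_)
    by_cases hme : Sym2.map (symOfTuple k) e = e'
    · rw [if_pos hme]
      by_cases hE : e ∈ (cartPow G k).edgeSet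
      · exact absurd (hme ▸ SimpleGraph.mem_edgeFinset.mp
          (eta_edge_mem (SimpleGraph.mem_edgeFinset.mpr hE))) he'
      · exact hx e hE
    · rw [if_neg hme]

lemma cycle_forward (x : Sym2 (Fin k → V) → ZMod 2) (hx : x ∈ cycleSpace (cartPow G k)) :
    inducedMap (symOfTuple k) x ∈ cycleSpace (reducedPow G k) := by
  rw [cycleSpace, Submodule.mem_inf] at hx ⊢
  obtain ⟨h1, h2⟩ := hx
  refine ⟨inducedMap_mem_edgeSpace x h1, ?_⟩
  rw [LinearMap.mem_ker]
  funext m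
  rw [boundary_inducedMap_eq x h1 m, LinearMap.mem_ker.mp h2]
  simp

/-- updating coordinate `j` is a graph homomorphism `G →g G^k`. -/
def updHom (G : SimpleGraph V) (k : ℕ) (u : Fin k → V) (j : Fin k) : G →g cartPow G k where
  toFun c := Function.update u j c
  map_rel' := by
    intro c c' h
    simp only [cartPow, SimpleGraph.fromRel_adj]
    refine ⟨fun hc => h.ne ?_, Or.inl ⟨j, ?_, fun l hl => ?_⟩⟩
    · have := congrFun hc j; simpa using this
    · simpa using h
    · simp [Function.update_of_ne hl]

lemma auxSwap (hG : G.Connected) (u : Fin k → V) (i j : Fin k) (hij : i ≠ j) :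
    ∃ w, w ∈ edgeSpace (cartPow G k) ∧ inducedMap (symOfTuple k) w = 0 ∧
      boundaryMap (cartPow G k) w = vind u + vind (u ∘ Equiv.swap i j) := by
  by_cases hab : u i = u j
  · have hsw : u ∘ Equiv.swap i j = u := by
      funext x
      rcases eq_or_ne x i with rfl | hxi
      · simp [Equiv.swap_apply_left, hab]
      rcases eq_or_ne x j with rfl | hxj
      · simp [Equiv.swap_apply_right, hab]
      · simp [Equiv.swap_apply_of_ne_of_ne hxi hxj]
    refine ⟨0, (edgeSpace _).zero_mem, map_zero _, ?_⟩
    rw [map_zero, hsw, fun_addself]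
  · obtain ⟨p⟩ : G.Reachable (u i) (u j) := hG.preconnected (u i) (u j)
    let F1 : G →g cartPow G k := updHom G k u j
    let F2 : G →g cartPow G k := updHom G k (Function.update u j (u i)) i
    refine ⟨walkChain (p.map F1) + walkChain (p.map F2),
      (edgeSpace _).add_mem (walkChain_mem_edgeSpace _) (walkChain_mem_edgeSpace _), ?_, ?_⟩
    · rw [map_add, inducedMap_walkChain_congr F1 F2 (symOfTuple k)
        (fun c => symOfTuple_update u hij c) p]
      exact fun_addself _
    · rw [map_add, boundaryMap_walkChain (p.map F1), boundaryMap_walkChain (p.map F2)]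
      have hF1b : F1 (u j) = u := Function.update_eq_self j u
      have hF2a : F2 (u i) = F1 (u i) := by
        show Function.update (Function.update u j (u i)) i (u i) = Function.update u j (u i)
        funext x
        rcases eq_or_ne x i with rfl | hxi
        · rw [Function.update_self, Function.update_of_ne hij]
        · rw [Function.update_of_ne hxi]
      have hF2b : F2 (u j) = u ∘ Equiv.swap i j := by
        show Function.update (Function.update u j (u i)) i (u j) = u ∘ Equiv.swap i j
        funext x
        rcases eq_or_ne x i with rfl | hxi
        · simp [Equiv.swap_apply_left]
        rcases eq_or_ne x j with rfl | hxj
        · simp [Function.update_of_ne hxi, Equiv.swap_apply_right]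
        · simp [Function.update_of_ne hxi, Function.update_of_ne hxj,
            Equiv.swap_apply_of_ne_of_ne hxi hxj]
      rw [hF1b, hF2a, hF2b]
      funext x
      simpa using zmod2_aux1 (vind u x) (vind (F1 (u i)) x) (vind (u ∘ Equiv.swap i j) x)

lemma auxPair (hG : G.Connected) (u v : Fin k → V)
    (h : symOfTuple k u = symOfTuple k v) :
    ∃ w, w ∈ edgeSpace (cartPow G k) ∧ inducedMap (symOfTuple k) w = 0 ∧
      boundaryMap (cartPow G k) w = vind u + vind v := by
  obtain ⟨σ, rfl⟩ := exists_perm_of_symOfTuple_eq h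
  clear h
  have key : ∀ σ : Equiv.Perm (Fin k), ∀ u : Fin k → V,
      ∃ w, w ∈ edgeSpace (cartPow G k) ∧ inducedMap (symOfTuple k) w = 0 ∧
        boundaryMap (cartPow G k) w = vind u + vind (u ∘ σ) := by
    intro σ
    refine Equiv.Perm.swap_induction_on σ ?_ ?_
    · intro u
      refine ⟨0, (edgeSpace _).zero_mem, map_zero _, ?_⟩
      rw [map_zero, show u ∘ (1 : Equiv.Perm (Fin k)) = u from rfl, fun_addself]
    · intro f x y hxy ih u
      obtain ⟨w1, hw1m, hw1i, hw1b⟩ := auxSwap hG u x y hxy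
      obtain ⟨w2, hw2m, hw2i, hw2b⟩ := ih (u ∘ Equiv.swap x y)
      refine ⟨w1 + w2, (edgeSpace _).add_mem hw1m hw2m, by rw [map_add, hw1i, hw2i, add_zero],
        ?_⟩
      rw [map_add, hw1b, hw2b]
      have hcomp : (u ∘ Equiv.swap x y) ∘ f = u ∘ (Equiv.swap x y * f) := by
        funext z; simp [Equiv.Perm.mul_apply]
      rw [hcomp]
      funext z
      simpa using zmod2_aux1' (vind u z) (vind (u ∘ Equiv.swap x y) z)
        (vind (u ∘ (Equiv.swap x y * f)) z)
  exact key σ u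

lemma auxCorr (hG : G.Connected) : ∀ (n : ℕ) (z : (Fin k → V) → ZMod 2),
    (Finset.univ.filter (fun v => z v ≠ 0)).card = n →
    (∀ m : Sym V k, ∑ v ∈ Finset.univ.filter (fun v => symOfTuple k v = m), z v = 0) →
    ∃ w, w ∈ edgeSpace (cartPow G k) ∧ inducedMap (symOfTuple k) w = 0 ∧
      boundaryMap (cartPow G k) w = z := by
  intro n
  induction n using Nat.strong_induction_on with
  | _ n ih =>
    intro z hcard hz
    by_cases h0 : ∀ v, z v = 0
    · exact ⟨0, (edgeSpace _).zero_mem, map_zero _, by rw [map_zero]; exact (funext h0).symm⟩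
    push_neg at h0
    obtain ⟨u, hu⟩ := h0
    have hv : ∃ v, symOfTuple k v = symOfTuple k u ∧ v ≠ u ∧ z v ≠ 0 := by
      by_contra hc
      push_neg at hc
      have hz' := hz (symOfTuple k u)
      rw [Finset.sum_eq_single u (fun v hvmem hvne => ?_) (fun hmem => absurd (by simp) hmem)]
        at hz'
      · exact hu hz'
      · have := hc v (Finset.mem_filter.mp hvmem).2
        by_contra hzz
        exact hzz (this hvne)
    obtain ⟨v, hvfib, hvu, hzv⟩ := hv
    set z' := z + vind u + vind v with hz'def
    have hne_uv : u ≠ v := fun h => hvu h.symm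
    have hsub : Finset.univ.filter (fun x => z' x ≠ 0)
        ⊆ (Finset.univ.filter (fun x => z x ≠ 0)).erase u := by
      intro x hx
      rw [Finset.mem_filter] at hx
      have hxu : x ≠ u := by
        rintro rfl
        apply hx.2
        simp only [hz'def, Pi.add_apply, vind]
        rw [if_neg hne_uv, zmod2_one (z x) hu]
        decide
      have hxv : x ≠ v := by
        rintro rfl
        apply hx.2
        simp only [hz'def, Pi.add_apply, vind]
        rw [if_neg hvu, zmod2_one (z x) hzv]
        decide
      have hzx : z x ≠ 0 := by
        intro h
        apply hx.2
        simp only [hz'def, Pi.add_apply, vind]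
        rw [if_neg hxu, if_neg hxv, h]
        decide
      exact Finset.mem_erase.mpr ⟨hxu, Finset.mem_filter.mpr ⟨Finset.mem_univ x, hzx⟩⟩
    have humem : u ∈ Finset.univ.filter (fun t => z t ≠ 0) :=
      Finset.mem_filter.mpr ⟨Finset.mem_univ u, hu⟩
    have h1 := Finset.card_le_card hsub
    rw [Finset.card_erase_of_mem humem, hcard] at h1
    have hn : 0 < n := hcard ▸ Finset.card_pos.mpr ⟨u, humem⟩
    have hlt : (Finset.univ.filter (fun x => z' x ≠ 0)).card < n := by omega
    have hzfib' : ∀ m : Sym V k,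
        ∑ x ∈ Finset.univ.filter (fun t => symOfTuple k t = m), z' x = 0 := by
      intro m
      have hsum : ∀ a : Fin k → V,
          (∑ x ∈ Finset.univ.filter (fun t => symOfTuple k t = m), vind a x)
          = if symOfTuple k a = m then 1 else 0 := by
        intro a
        by_cases ha : symOfTuple k a = m
        · rw [if_pos ha]
          have hsingle := Finset.sum_eq_single
            (s := Finset.univ.filter (fun t => symOfTuple k t = m))
            (f := fun x => vind a x) a (fun b _ hb => if_neg hb)
            (fun hnot => absurd (Finset.mem_filter.mpr ⟨Finset.mem_univ a, ha⟩) hnot)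
          rw [hsingle]
          exact if_pos rfl
        · rw [if_neg ha]
          refine Finset.sum_eq_zero (fun b hb => ?_)
          have hba : b ≠ a := fun h => ha (h ▸ (Finset.mem_filter.mp hb).2)
          exact if_neg hba
      simp only [hz'def, Pi.add_apply]
      rw [Finset.sum_add_distrib, Finset.sum_add_distrib, hz m, hsum u, hsum v, hvfib]
      by_cases hm : symOfTuple k u = m <;> simp [hm] <;> decide
    obtain ⟨w1, hw1m, hw1i, hw1b⟩ := ih _ hlt z' rfl hzfib'
    obtain ⟨w2, hw2m, hw2i, hw2b⟩ := auxPair hG u v hvfib.symm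
    refine ⟨w1 + w2, (edgeSpace _).add_mem hw1m hw2m,
      by rw [map_add, hw1i, hw2i, add_zero], ?_⟩
    rw [map_add, hw1b, hw2b]
    funext x
    simp only [hz'def, Pi.add_apply]
    exact zmod2_aux2 (z x) (vind u x) (vind v x)

end Main

section Lift

variable [Fintype V] [DecidableEq V] {G : SimpleGraph V} {k : ℕ}

lemma symOfTuple_get (l : List V) (hk : l.length = k) :
    (symOfTuple k (fun i => l.get (Fin.cast hk.symm i)) : Multiset V) = ↑l := by
  show ((List.ofFn (fun i => l.get (Fin.cast hk.symm i)) : List V) : Multiset V) = ↑l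
  subst hk
  simp [List.ofFn_get]

lemma auxLiftRel {m m' : Sym V k} (a b : V) (f : Multiset V) (hab : G.Adj a b)
    (hm : (m : Multiset V) = a ::ₘ f) (hm' : (m' : Multiset V) = b ::ₘ f) :
    ∃ u v : Fin k → V, (cartPow G k).Adj u v ∧ symOfTuple k u = m ∧ symOfTuple k v = m' := by
  have hcard : (a ::ₘ f).card = k := by rw [← hm]; exact m.prop
  have hk : (a :: f.toList).length = k := by
    simpa [Multiset.length_toList] using hcard
  have hk' : (b :: f.toList).length = k := by
    simpa [Multiset.length_toList] using hcard
  have hkpos : 0 < k := by rw [← hk]; simp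
  set u : Fin k → V := fun i => (a :: f.toList).get (Fin.cast hk.symm i) with hu
  set v : Fin k → V := fun i => (b :: f.toList).get (Fin.cast hk'.symm i) with hv
  set i0 : Fin k := ⟨0, hkpos⟩ with hi0
  have hui : u i0 = a := rfl
  have hvi : v i0 = b := rfl
  have hrest : ∀ j : Fin k, j ≠ i0 → u j = v j := by
    intro j hj
    obtain ⟨jv, hjlt⟩ := j
    cases jv with
    | zero => exact absurd rfl hj
    | succ jn => rfl
  have hadj : (cartPow G k).Adj u v := by
    simp only [cartPow, SimpleGraph.fromRel_adj]
    constructor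
    · intro hc
      exact hab.ne (by rw [← hui, ← hvi, hc])
    · exact Or.inl ⟨i0, by rw [hui, hvi]; exact hab, hrest⟩
  refine ⟨u, v, hadj, ?_, ?_⟩
  · apply Sym.coe_injective
    rw [hu, symOfTuple_get (a :: f.toList) hk, hm, ← Multiset.cons_coe, Multiset.coe_toList]
  · apply Sym.coe_injective
    rw [hv, symOfTuple_get (b :: f.toList) hk', hm', ← Multiset.cons_coe, Multiset.coe_toList]

lemma auxLift {m m' : Sym V k} (h : (reducedPow G k).Adj m m') :
    ∃ e ∈ (cartPow G k).edgeSet, Sym2.map (symOfTuple k) e = s(m, m') := by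
  simp only [reducedPow, SimpleGraph.fromRel_adj] at h
  obtain ⟨-, ⟨a, b, hab, f, hm, hm'⟩ | ⟨a, b, hab, f, hm', hm⟩⟩ := h
  · obtain ⟨u, v, hadj, hu2, hv2⟩ := auxLiftRel a b f hab hm hm'
    exact ⟨s(u, v), (cartPow G k).mem_edgeSet.mpr hadj, by rw [Sym2.map_pair_eq, hu2, hv2]⟩
  · obtain ⟨u, v, hadj, hu2, hv2⟩ := auxLiftRel a b f hab hm' hm
    exact ⟨s(v, u), (cartPow G k).mem_edgeSet.mpr hadj.symm,
      by rw [Sym2.map_pair_eq, hu2, hv2]⟩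

lemma sum_smul_echain {β : Type*} [Fintype β] {H : SimpleGraph β} {y : Sym2 β → ZMod 2}
    (hy : y ∈ edgeSpace H) : ∑ e' ∈ H.edgeFinset, y e' • echain e' = y := by
  funext e''
  rw [Finset.sum_apply]
  have hterm : ∀ e' ∈ H.edgeFinset, (y e' • echain e') e'' = if e'' = e' then y e' else 0 := by
    intro e' _
    by_cases h : e'' = e'
    · simp [echain, h]
    · simp [echain, h]
  rw [Finset.sum_congr rfl hterm, Finset.sum_ite_eq]
  by_cases h : e'' ∈ H.edgeFinset
  · rw [if_pos h]
  · rw [if_neg h]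
    exact (hy e'' (fun hc => h (SimpleGraph.mem_edgeFinset.mpr hc))).symm

end Lift

/-- For a connected graph `G`, the natural projection `η : G^k → G^(k)` (sending a
tuple to its `S_k`-orbit, i.e. its multiset of coordinates) induces a linear map on
cycle spaces over `𝔽₂` which is surjective onto the cycle space of `G^(k)`. -/
theorem stmt_10 [Fintype V] [DecidableEq V] (G : SimpleGraph V) (hG : G.Connected) (k : ℕ) :
    (∀ x ∈ cycleSpace (cartPow G k), inducedMap (symOfTuple k) x ∈ cycleSpace (reducedPow G k))
      ∧ ∀ y ∈ cycleSpace (reducedPow G k),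
          ∃ x ∈ cycleSpace (cartPow G k), inducedMap (symOfTuple k) x = y := by
  constructor
  · intro x hx
    exact cycle_forward x hx
  · intro y hy
    rw [cycleSpace, Submodule.mem_inf] at hy
    obtain ⟨hy1, hy2⟩ := hy
    have hlift : ∀ e' ∈ (reducedPow G k).edgeFinset,
        ∃ e ∈ (cartPow G k).edgeSet, Sym2.map (symOfTuple k) e = e' := by
      intro e' he'
      induction e' using Sym2.ind with
      | _ m m' => exact auxLift (SimpleGraph.mem_edgeFinset.mp he')
    set x0 : Sym2 (Fin k → V) → ZMod 2 :=
      ∑ e' ∈ (reducedPow G k).edgeFinset.attach, y ↑e' • echain (hlift ↑e' e'.2).choose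
      with hx0def
    have hx0mem : x0 ∈ edgeSpace (cartPow G k) := by
      rw [hx0def]
      exact Submodule.sum_mem _ (fun e' _ => Submodule.smul_mem _ _
        (echain_mem_edgeSpace (hlift ↑e' e'.2).choose_spec.1))
    have hx0img : inducedMap (symOfTuple k) x0 = y := by
      rw [hx0def, map_sum]
      have hterm : ∀ e' ∈ (reducedPow G k).edgeFinset.attach,
          inducedMap (symOfTuple k) (y ↑e' • echain (hlift ↑e' e'.2).choose)
          = y ↑e' • echain (e' : Sym2 (Sym V k)) := by
        intro e' _
        rw [map_smul]
        congr 1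
        have hnd : ¬ (Sym2.map (symOfTuple k) (hlift ↑e' e'.2).choose).IsDiag := by
          rw [(hlift ↑e' e'.2).choose_spec.2]
          exact (reducedPow G k).not_isDiag_of_mem_edgeSet (SimpleGraph.mem_edgeFinset.mp e'.2)
        rw [inducedMap_echain_nondiag _ hnd, (hlift ↑e' e'.2).choose_spec.2]
      rw [Finset.sum_congr rfl hterm,
        Finset.sum_attach (reducedPow G k).edgeFinset (fun e' => y e' • echain e')]
      exact sum_smul_echain hy1
    have hz : ∀ m : Sym V k, ∑ v ∈ Finset.univ.filter (fun v => symOfTuple k v = m),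
        boundaryMap (cartPow G k) x0 v = 0 := by
      intro m
      rw [← boundary_inducedMap_eq x0 hx0mem m, hx0img, LinearMap.mem_ker.mp hy2]
      simp
    obtain ⟨w, hwmem, hwimg, hwb⟩ := auxCorr hG _ (boundaryMap (cartPow G k) x0) rfl hz
    refine ⟨x0 + w, ?_, ?_⟩
    · rw [cycleSpace, Submodule.mem_inf]
      refine ⟨(edgeSpace _).add_mem hx0mem hwmem, ?_⟩
      rw [LinearMap.mem_ker, map_add, hwb, fun_addself]
    · rw [map_add, hx0img, hwimg, add_zero]
end

section
/- The Cartesian square (ab □ cd)f, defined as the sum of edges acf·bcf + bcf·bdf + bdf·adf + adf·acf in the edge space of G^(k) over F_2, is zero if and only if the edges ab and cd of G are equal. -/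
open Finset
open scoped Classical

variable {V W : Type*}

/-- The vertex `x·y·f` of `G^(k)`, for `f` a monomial of degree `k-2`. -/
def symCons2 (k : ℕ) (x y : V) (f : Multiset V) (h : Multiset.card f + 2 = k) : Sym V k :=
  ⟨x ::ₘ y ::ₘ f, by simp [Multiset.card_cons]; omega⟩

/-- The indicator vector of a single edge in the `𝔽₂` edge space. -/
noncomputable def edgeVec {α : Type*} (e : Sym2 α) : Sym2 α → ZMod 2 :=
  fun e' => if e' = e then 1 else 0

/-- The Cartesian square `(ab □ cd)f` in `G^(k)`: the sum (over `𝔽₂`) of the four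
edges `acf·bcf + bcf·bdf + bdf·adf + adf·acf`. -/
noncomputable def cartSquare (k : ℕ) (a b c d : V) (f : Multiset V) (h : Multiset.card f + 2 = k) :
    Sym2 (Sym V k) → ZMod 2 :=
  edgeVec s(symCons2 k a c f h, symCons2 k b c f h)
    + edgeVec s(symCons2 k b c f h, symCons2 k b d f h)
    + edgeVec s(symCons2 k b d f h, symCons2 k a d f h)
    + edgeVec s(symCons2 k a d f h, symCons2 k a c f h)

lemma cons_pair_eq {x y u v : V} (f : Multiset V) :
    x ::ₘ y ::ₘ f = u ::ₘ v ::ₘ f ↔ (x = u ∧ y = v) ∨ (x = v ∧ y = u) := by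
  constructor
  · intro h
    have h2 : (x ::ₘ y ::ₘ 0) + f = (u ::ₘ v ::ₘ 0) + f := by
      simpa [Multiset.cons_add] using h
    have h3 : (x ::ₘ ({y} : Multiset V)) = u ::ₘ {v} := by
      simpa using add_right_cancel h2
    rcases Multiset.cons_eq_cons.mp h3 with ⟨hx, hy⟩ | ⟨_, cs, h1, h2'⟩
    · exact Or.inl ⟨hx, Multiset.singleton_inj.mp hy⟩
    · have := (Multiset.singleton_eq_cons_iff _).mp h1
      have := (Multiset.singleton_eq_cons_iff _).mp h2'
      exact Or.inr ⟨by tauto, by tauto⟩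
  · rintro (⟨rfl, rfl⟩ | ⟨rfl, rfl⟩)
    · rfl
    · exact Multiset.cons_swap ..

lemma symCons2_eq_iff (k : ℕ) (x y u v : V) (f : Multiset V) (h : Multiset.card f + 2 = k) :
    symCons2 k x y f h = symCons2 k u v f h ↔ (x = u ∧ y = v) ∨ (x = v ∧ y = u) := by
  exact Sym.ext_iff.trans (cons_pair_eq f)

lemma symCons2_swap (k : ℕ) (x y : V) (f : Multiset V) (h : Multiset.card f + 2 = k) :
    symCons2 k x y f h = symCons2 k y x f h :=
  Subtype.ext (Multiset.cons_swap x y f)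

lemma edgeVec_cancel₁ {α : Type*} (e₁ e₂ : Sym2 α) :
    edgeVec e₁ + edgeVec e₂ + edgeVec e₂ + edgeVec e₁ = 0 := by
  funext e'
  simp only [Pi.add_apply, Pi.zero_apply, edgeVec]
  split_ifs <;> decide

lemma edgeVec_cancel₂ {α : Type*} (e₁ e₂ : Sym2 α) :
    edgeVec e₁ + edgeVec e₁ + edgeVec e₂ + edgeVec e₂ = 0 := by
  funext e'
  simp only [Pi.add_apply, Pi.zero_apply, edgeVec]
  split_ifs <;> decide

lemma edgeVec_cancelA {α : Type*} (p q r : α) :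
    edgeVec s(p, q) + edgeVec s(q, r) + edgeVec s(r, q) + edgeVec s(q, p) = 0 := by
  rw [show s(r, q) = s(q, r) from Sym2.eq_swap, show s(q, p) = s(p, q) from Sym2.eq_swap]
  exact edgeVec_cancel₁ _ _

lemma edgeVec_cancelB {α : Type*} (p q r : α) :
    edgeVec s(p, q) + edgeVec s(q, p) + edgeVec s(p, r) + edgeVec s(r, p) = 0 := by
  rw [show s(q, p) = s(p, q) from Sym2.eq_swap, show s(r, p) = s(p, r) from Sym2.eq_swap]
  exact edgeVec_cancel₂ _ _

/-- The Cartesian square `(ab □ cd)f` (the `𝔽₂`-sum of its four edges) is zero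
if and only if the edges `ab` and `cd` of `G` coincide. -/
theorem stmt_15 (G : SimpleGraph V) (k : ℕ) (a b c d : V)
    (hab : G.Adj a b) (hcd : G.Adj c d)
    (f : Multiset V) (h : Multiset.card f + 2 = k) :
    cartSquare k a b c d f h = 0 ↔ s(a, b) = s(c, d) := by
  have hne : a ≠ b := hab.ne
  have hne' : c ≠ d := hcd.ne
  constructor
  · intro hz
    by_contra hpair
    set e₁ := s(symCons2 k a c f h, symCons2 k b c f h) with he₁
    set e₂ := s(symCons2 k b c f h, symCons2 k b d f h) with he₂
    set e₃ := s(symCons2 k b d f h, symCons2 k a d f h) with he₃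
    set e₄ := s(symCons2 k a d f h, symCons2 k a c f h) with he₄
    have hval : edgeVec e₁ e₁ + edgeVec e₂ e₁ + edgeVec e₃ e₁ + edgeVec e₄ e₁ = 0 := by
      have := congrFun hz e₁
      simp only [cartSquare, Pi.add_apply, Pi.zero_apply, ← he₁, ← he₂, ← he₃, ← he₄] at this
      exact this
    have h12 : e₁ ≠ e₂ := by
      intro hh
      rcases Sym2.eq_iff.mp hh with ⟨h1, h2⟩ | ⟨h1, h2⟩
      · rcases (symCons2_eq_iff k a c b c f h).mp h1 with ⟨h3, _⟩ | ⟨h3, h4⟩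
        · exact hne h3
        · exact hne (h3.trans h4)
      · rcases (symCons2_eq_iff k a c b d f h).mp h1 with ⟨h3, _⟩ | ⟨h3, h4⟩
        · exact hne h3
        · exact hpair (by rw [Sym2.eq_iff]; right; exact ⟨h3, h4.symm⟩)
    have h13 : e₁ ≠ e₃ := by
      intro hh
      rcases Sym2.eq_iff.mp hh with ⟨h1, h2⟩ | ⟨h1, h2⟩
      · rcases (symCons2_eq_iff k a c b d f h).mp h1 with ⟨h3, _⟩ | ⟨h3, h4⟩
        · exact hne h3
        · exact hpair (by rw [Sym2.eq_iff]; right; exact ⟨h3, h4.symm⟩)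
      · rcases (symCons2_eq_iff k a c a d f h).mp h1 with ⟨_, h4⟩ | ⟨h3, h4⟩
        · exact hne' h4
        · exact hne' (h4.trans h3)
    have h14 : e₁ ≠ e₄ := by
      intro hh
      rcases Sym2.eq_iff.mp hh with ⟨h1, h2⟩ | ⟨h1, h2⟩
      · rcases (symCons2_eq_iff k a c a d f h).mp h1 with ⟨_, h4⟩ | ⟨h3, h4⟩
        · exact hne' h4
        · exact hne' (h4.trans h3)
      · rcases (symCons2_eq_iff k b c a d f h).mp h2 with ⟨h3, _⟩ | ⟨h3, h4⟩
        · exact hne h3.symm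
        · exact hpair (by rw [Sym2.eq_iff]; left; exact ⟨h4.symm, h3⟩)
    simp [edgeVec, h12, h13, h14] at hval
  · intro hpair
    rcases Sym2.eq_iff.mp hpair with ⟨rfl, rfl⟩ | ⟨rfl, rfl⟩
    · unfold cartSquare
      rw [symCons2_swap k a b f h]
      exact edgeVec_cancelA _ _ _
    · unfold cartSquare
      rw [symCons2_swap k b a f h]
      exact edgeVec_cancelB _ _ _
end

section
/- Let G be a connected graph with spanning tree T rooted at a_1, vertices indexed by a breadth-first traversal. Define Υ = {(e_i □ e_j)f : 2 ≤ i < j ≤ v, f ∈ M_{k-2}(a_1,...,a_j)} and Ω = {(a_ℓ a_m □ e_j)f : a_ℓ a_m ∈ E(G)\E(T), 2 ≤ j ≤ v, f ∈ M_{k-2}(a_1,...,a_j)}, where e_j is the tree edge whose endpoint farther from the root is a_j. Then Υ ∪ Ω is a linearly independent set in the cycle space of G^(k) over F_2. -/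
open Finset
open scoped Classical

variable {V W : Type*}

/-- The set `Υ` of Cartesian squares `(e_i □ e_j)f`, where `e_i`, `e_j` are tree
edges (given by the parent function, with deeper endpoints `i < j`) and
`f ∈ M_{k-2}(a_1, …, a_j)` (a monomial in the indeterminates indexed `≤ j`).
Vertices are `0`-indexed, with root `0`. -/
def upsilonSet {n : ℕ} (k : ℕ) (parent : Fin (n + 1) → Fin (n + 1)) :
    Set (Sym2 (Sym (Fin (n + 1)) k) → ZMod 2) :=
  {x | ∃ i j : Fin (n + 1), 0 < i ∧ i < j ∧
    ∃ (f : Multiset (Fin (n + 1))) (h : Multiset.card f + 2 = k),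
      (∀ a ∈ f, a ≤ j) ∧ x = cartSquare k (parent i) i (parent j) j f h}

/-- The set `Ω` of Cartesian squares `(a_ℓ a_m □ e_j)f`, where `a_ℓ a_m` is a
non-tree edge of `G`, `e_j` is a tree edge with deeper endpoint `j ≠ 0`, and
`f ∈ M_{k-2}(a_1, …, a_j)`. -/
def omegaSet {n : ℕ} (k : ℕ) (G T : SimpleGraph (Fin (n + 1)))
    (parent : Fin (n + 1) → Fin (n + 1)) :
    Set (Sym2 (Sym (Fin (n + 1)) k) → ZMod 2) :=
  {x | ∃ l m : Fin (n + 1), G.Adj l m ∧ ¬ T.Adj l m ∧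
    ∃ j : Fin (n + 1), j ≠ 0 ∧
      ∃ (f : Multiset (Fin (n + 1))) (h : Multiset.card f + 2 = k),
        (∀ a ∈ f, a ≤ j) ∧ x = cartSquare k l m (parent j) j f h}

lemma cancel_aux {α : Type*} [DecidableEq α] {x1 x2 y1 y2 : α} {g g' : Multiset α}
    (hx : x1 ≠ x2) (hy : y1 ≠ y2) (e1 : x1 ::ₘ g' = y1 ::ₘ g) (e2 : x2 ::ₘ g' = y2 ::ₘ g) :
    x1 = y1 ∧ x2 = y2 ∧ g' = g := by
  have h11 : x1 = y1 := by
    by_contra hne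
    have c1 := congrArg (Multiset.count x1) e1
    have c2 := congrArg (Multiset.count x1) e2
    rw [Multiset.count_cons, Multiset.count_cons] at c1 c2
    rw [if_pos rfl, if_neg hne] at c1
    rw [if_neg hx] at c2
    split_ifs at c2 with h <;> omega
  subst h11
  have hg : g' = g := (Multiset.cons_inj_right x1).mp e1
  subst hg
  exact ⟨rfl, (Multiset.cons_inj_left _).mp e2, rfl⟩
lemma head_eq {n : ℕ} {d d' : Fin n} {f f' : Multiset (Fin n)}
    (hf : ∀ z ∈ f, z ≤ d) (hf' : ∀ z ∈ f', z ≤ d') (e : d' ::ₘ f' = d ::ₘ f) :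
    d' = d ∧ f' = f := by
  have h1 : d' ≤ d := by
    have hm : d' ∈ d ::ₘ f := by rw [← e]; exact Multiset.mem_cons_self _ _
    rcases Multiset.mem_cons.mp hm with hh | hh
    · exact le_of_eq hh
    · exact hf _ hh
  have h2 : d ≤ d' := by
    have hm : d ∈ d' ::ₘ f' := by rw [e]; exact Multiset.mem_cons_self _ _
    rcases Multiset.mem_cons.mp hm with hh | hh
    · exact le_of_eq hh
    · exact hf' _ hh
  have hd : d' = d := le_antisymm h1 h2
  subst hd
  exact ⟨rfl, (Multiset.cons_inj_right _).mp e⟩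
lemma symCons2_eq {k : ℕ} {x y x' y' : V} {f f' : Multiset V}
    {h : Multiset.card f + 2 = k} {h' : Multiset.card f' + 2 = k}
    (e : symCons2 k x y f h = symCons2 k x' y' f' h') :
    x ::ₘ y ::ₘ f = x' ::ₘ y' ::ₘ f' := congrArg Subtype.val e
lemma cartSquare_comm (k : ℕ) (a b c d : V) (f : Multiset V) (h : Multiset.card f + 2 = k) :
    cartSquare k a b c d f h = cartSquare k b a c d f h := by
  unfold cartSquare
  conv_rhs => rw [Sym2.eq_swap (a := symCons2 k b c f h) (b := symCons2 k a c f h),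
    Sym2.eq_swap (a := symCons2 k a c f h) (b := symCons2 k a d f h),
    Sym2.eq_swap (a := symCons2 k a d f h) (b := symCons2 k b d f h),
    Sym2.eq_swap (a := symCons2 k b d f h) (b := symCons2 k b c f h)]
  abel

lemma lemA {v k : ℕ} (parent : Fin (v+1) → Fin (v+1))
    {a b d a' b' d' : Fin (v+1)} {f f' : Multiset (Fin (v+1))}
    {h : Multiset.card f + 2 = k} {h' : Multiset.card f' + 2 = k}
    (hab : a ≠ b) (hab' : a' ≠ b')
    (hf : ∀ z ∈ f, z ≤ d) (hf' : ∀ z ∈ f', z ≤ d')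
    (e : s(symCons2 k b' d' f' h', symCons2 k a' d' f' h')
        = s(symCons2 k b d f h, symCons2 k a d f h)) :
    cartSquare k a' b' (parent d') d' f' h' = cartSquare k a b (parent d) d f h := by
  rcases Sym2.eq_iff.mp e with ⟨E1, E2⟩ | ⟨E1, E2⟩
  · obtain ⟨rfl, rfl, hg⟩ := cancel_aux (Ne.symm hab') (Ne.symm hab) (symCons2_eq E1) (symCons2_eq E2)
    obtain ⟨rfl, rfl⟩ := head_eq hf hf' hg
    rfl
  · obtain ⟨rfl, rfl, hg⟩ := cancel_aux (Ne.symm hab') hab (symCons2_eq E1) (symCons2_eq E2)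
    obtain ⟨rfl, rfl⟩ := head_eq hf hf' hg
    apply cartSquare_comm

lemma lemB_aux {v k : ℕ} {T : SimpleGraph (Fin (v+1))} {parent : Fin (v+1) → Fin (v+1)}
    (hpar : ∀ j, j ≠ 0 → T.Adj (parent j) j ∧ parent j < j)
    {a b d z' d' : Fin (v+1)} {f f' : Multiset (Fin (v+1))}
    (h : Multiset.card f + 2 = k)
    {flag flag' : Bool}
    (hd0' : d' ≠ 0)
    (hpair : (parent d' = a ∧ d' = b) ∨ (parent d' = b ∧ d' = a))
    (heq : z' ::ₘ f' = d ::ₘ f)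
    (hf' : ∀ z ∈ f', z ≤ d')
    (hz : flag' = false → z' < d')
    (hF : flag = false → a = parent b ∧ b ≠ 0 ∧ b < d)
    (hTf : flag = true → ¬ T.Adj a b) :
    (if flag = true then k*v+1 else 0) + d.val + (Multiset.map Fin.val f).sum
      < (if flag' = true then k*v+1 else 0) + d'.val + (Multiset.map Fin.val f').sum := by
  have hTd' := (hpar d' hd0').1
  have hTab : T.Adj a b := by
    rcases hpair with ⟨h1, h2⟩ | ⟨h1, h2⟩
    · rw [← h1, ← h2]; exact hTd'
    · rw [← h1, ← h2]; exact hTd'.symm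
  cases flag with
  | true => exact absurd hTab (hTf rfl)
  | false =>
    obtain ⟨hab_par, hb0, hbd⟩ := hF rfl
    have haltb : a < b := by rw [hab_par]; exact (hpar b hb0).2
    have hd'd : d' < d := by
      rcases hpair with ⟨_, h2⟩ | ⟨_, h2⟩
      · rw [h2]; exact hbd
      · rw [h2]; exact lt_trans haltb hbd
    cases flag' with
    | false =>
      exfalso
      have hd_mem : d ∈ z' ::ₘ f' := by rw [heq]; exact Multiset.mem_cons_self _ _
      have hdd' : d ≤ d' := by
        rcases Multiset.mem_cons.mp hd_mem with hh | hh
        · rw [hh]; exact le_of_lt (hz rfl)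
        · exact hf' _ hh
      exact absurd (lt_of_le_of_lt hdd' hd'd) (lt_irrefl d)
    | true =>
      rw [if_neg Bool.false_ne_true, if_pos rfl]
      have h1 : d.val ≤ v := Fin.is_le d
      have h2 : (Multiset.map Fin.val f).sum ≤ Multiset.card f * v := by
        have := Multiset.sum_le_card_nsmul (Multiset.map Fin.val f) v
          (by intro x hx; obtain ⟨y, _, rfl⟩ := Multiset.mem_map.mp hx; exact Fin.is_le y)
        simpa [Multiset.card_map, smul_eq_mul] using this
      have h3 : k * v = Multiset.card f * v + 2 * v := by rw [← h]; ring
      linarith [Nat.zero_le ((Multiset.map Fin.val f').sum), Nat.zero_le d'.val]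

lemma lemB {v k : ℕ} {T : SimpleGraph (Fin (v+1))} {parent : Fin (v+1) → Fin (v+1)}
    (hpar : ∀ j, j ≠ 0 → T.Adj (parent j) j ∧ parent j < j)
    {a b d : Fin (v+1)} {f : Multiset (Fin (v+1))} {h : Multiset.card f + 2 = k}
    {a' b' d' : Fin (v+1)} {f' : Multiset (Fin (v+1))} {h' : Multiset.card f' + 2 = k}
    {flag flag' : Bool}
    (hab : a ≠ b) (hd0 : d ≠ 0) (hf : ∀ z ∈ f, z ≤ d)
    (hF : flag = false → a = parent b ∧ b ≠ 0 ∧ b < d)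
    (hTf : flag = true → ¬ T.Adj a b)
    (hab' : a' ≠ b') (hd0' : d' ≠ 0) (hf' : ∀ z ∈ f', z ≤ d')
    (hF' : flag' = false → a' = parent b' ∧ b' ≠ 0 ∧ b' < d')
    (hTf' : flag' = true → ¬ T.Adj a' b')
    (hmatch :
      s(symCons2 k a' (parent d') f' h', symCons2 k b' (parent d') f' h')
          = s(symCons2 k b d f h, symCons2 k a d f h) ∨
      s(symCons2 k b' (parent d') f' h', symCons2 k b' d' f' h')
          = s(symCons2 k b d f h, symCons2 k a d f h) ∨
      s(symCons2 k a' d' f' h', symCons2 k a' (parent d') f' h')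
          = s(symCons2 k b d f h, symCons2 k a d f h)) :
    (if flag = true then k*v+1 else 0) + d.val + (Multiset.map Fin.val f).sum
      < (if flag' = true then k*v+1 else 0) + d'.val + (Multiset.map Fin.val f').sum := by
  have hcd' := hpar d' hd0'
  obtain e | e | e := hmatch
  · -- t = 1 : families are equal, second component strictly increases
    have key : (T.Adj a' b' ↔ T.Adj a b) ∧ (parent d') ::ₘ f' = d ::ₘ f := by
      rcases Sym2.eq_iff.mp e with ⟨E1, E2⟩ | ⟨E1, E2⟩
      · obtain ⟨rfl, rfl, hg⟩ := cancel_aux hab' (Ne.symm hab) (symCons2_eq E1) (symCons2_eq E2)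
        exact ⟨T.adj_comm _ _, hg⟩
      · obtain ⟨rfl, rfl, hg⟩ := cancel_aux hab' hab (symCons2_eq E1) (symCons2_eq E2)
        exact ⟨Iff.rfl, hg⟩
    obtain ⟨hiff, hg⟩ := key
    have hflag : flag' = flag := by
      cases flag with
      | false =>
        obtain ⟨hpb, hb0, _⟩ := hF rfl
        have hTab : T.Adj a b := by rw [hpb]; exact (hpar b hb0).1
        cases flag' with
        | false => rfl
        | true => exact absurd (hiff.mpr hTab) (hTf' rfl)
      | true =>
        cases flag' with
        | true => rfl
        | false =>
          obtain ⟨hpb', hb0', _⟩ := hF' rfl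
          have hTab' : T.Adj a' b' := by rw [hpb']; exact (hpar b' hb0').1
          exact absurd (hiff.mp hTab') (hTf rfl)
    have hsum : (parent d').val + (Multiset.map Fin.val f').sum
        = d.val + (Multiset.map Fin.val f).sum := by
      have := congrArg (fun s : Multiset (Fin (v+1)) => (Multiset.map Fin.val s).sum) hg
      simpa using this
    have hlt : (parent d').val < d'.val := hcd'.2
    rw [hflag]
    cases flag <;> simp only [if_neg Bool.false_ne_true, if_pos rfl] <;> linarith
  · -- t = 2
    have key : ((parent d' = a ∧ d' = b) ∨ (parent d' = b ∧ d' = a)) ∧ b' ::ₘ f' = d ::ₘ f := by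
      rcases Sym2.eq_iff.mp e with ⟨E1, E2⟩ | ⟨E1, E2⟩
      · have M1 := symCons2_eq E1
        have M2 := symCons2_eq E2
        rw [Multiset.cons_swap] at M1 M2
        obtain ⟨h1, h2, hg⟩ := cancel_aux (ne_of_lt hcd'.2) (Ne.symm hab) M1 M2
        exact ⟨Or.inr ⟨h1, h2⟩, hg⟩
      · have M1 := symCons2_eq E1
        have M2 := symCons2_eq E2
        rw [Multiset.cons_swap] at M1 M2
        obtain ⟨h1, h2, hg⟩ := cancel_aux (ne_of_lt hcd'.2) hab M1 M2
        exact ⟨Or.inl ⟨h1, h2⟩, hg⟩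
    exact lemB_aux hpar h hd0' key.1 key.2 hf' (fun hfl => (hF' hfl).2.2) hF hTf
  · -- t = 4
    have key : ((parent d' = a ∧ d' = b) ∨ (parent d' = b ∧ d' = a)) ∧ a' ::ₘ f' = d ::ₘ f := by
      rcases Sym2.eq_iff.mp e with ⟨E1, E2⟩ | ⟨E1, E2⟩
      · have M1 := symCons2_eq E1
        have M2 := symCons2_eq E2
        rw [Multiset.cons_swap] at M1 M2
        obtain ⟨h1, h2, hg⟩ := cancel_aux (Ne.symm (ne_of_lt hcd'.2)) (Ne.symm hab) M1 M2
        exact ⟨Or.inl ⟨h2, h1⟩, hg⟩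
      · have M1 := symCons2_eq E1
        have M2 := symCons2_eq E2
        rw [Multiset.cons_swap] at M1 M2
        obtain ⟨h1, h2, hg⟩ := cancel_aux (Ne.symm (ne_of_lt hcd'.2)) hab M1 M2
        exact ⟨Or.inr ⟨h2, h1⟩, hg⟩
    refine lemB_aux hpar h hd0' key.1 key.2 hf' ?_ hF hTf
    intro hfl
    obtain ⟨hpb', hb0', hbd'⟩ := hF' hfl
    have : a' < b' := by rw [hpb']; exact (hpar b' hb0').2
    exact lt_trans this hbd'

/-- The set `B = Υ ∪ Ω` of Cartesian squares determined by a breadth-first rooted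
spanning tree `T` of `G` is linearly independent in the cycle space of `G^(k)`
over `𝔽₂`. -/
theorem stmt_16
    (v k : ℕ) (G T : SimpleGraph (Fin (v + 1)))
    (hTG : T ≤ G) (hT : T.IsTree)
    (parent : Fin (v + 1) → Fin (v + 1))
    (hpar : ∀ j, j ≠ 0 → T.Adj (parent j) j ∧ parent j < j)
    (hbfs : ∀ i j : Fin (v + 1), i ≤ j → T.dist 0 i ≤ T.dist 0 j) :
    LinearIndependent (ZMod 2)
      ((↑) : ↥(upsilonSet k parent ∪ omegaSet k G T parent) →
        (Sym2 (Sym (Fin (v + 1)) k) → ZMod 2)) := by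
  classical
  rw [linearIndependent_iff]
  intro l hl
  by_contra hl0
  have hex : ∀ x : ↥(upsilonSet k parent ∪ omegaSet k G T parent),
      ∃ (a b d : Fin (v+1)) (f : Multiset (Fin (v+1))) (h : Multiset.card f + 2 = k)
        (flag : Bool),
        (a ≠ b ∧ d ≠ 0 ∧ (∀ z ∈ f, z ≤ d) ∧
        (flag = false → a = parent b ∧ b ≠ 0 ∧ b < d) ∧
        (flag = true → ¬ T.Adj a b)) ∧
        (x : Sym2 (Sym (Fin (v+1)) k) → ZMod 2) = cartSquare k a b (parent d) d f h := by
    rintro ⟨x, hx | hx⟩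
    · obtain ⟨i, j, hi0, hij, f, h, hfj, rfl⟩ := hx
      have hi0' : i ≠ 0 := Fin.pos_iff_ne_zero.mp hi0
      have hj0 : j ≠ 0 := Fin.pos_iff_ne_zero.mp (lt_trans hi0 hij)
      refine ⟨parent i, i, j, f, h, false,
        ⟨ne_of_lt (hpar i hi0').2, hj0, hfj, fun _ => ⟨rfl, hi0', hij⟩,
          fun hc => absurd hc (by simp)⟩, rfl⟩
    · obtain ⟨a, b, hG, hTadj, j, hj0, f, h, hfj, rfl⟩ := hx
      exact ⟨a, b, j, f, h, true,
        ⟨hG.ne, hj0, hfj, fun hc => absurd hc (by simp), fun _ => hTadj⟩, rfl⟩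
  choose pa pb pd pf ph pflag hprop hrepr using hex
  have hSne : l.support.Nonempty := Finsupp.support_nonempty_iff.mpr hl0
  obtain ⟨x0, hx0S, hx0max⟩ := Finset.exists_max_image l.support
    (fun x => (if pflag x = true then k*v+1 else 0) + (pd x).val
        + (Multiset.map Fin.val (pf x)).sum) hSne
  set ε : Sym2 (Sym (Fin (v+1)) k) :=
    s(symCons2 k (pb x0) (pd x0) (pf x0) (ph x0),
      symCons2 k (pa x0) (pd x0) (pf x0) (ph x0)) with hε
  have P0 := hprop x0
  -- value of any other support element at ε is 0
  have hval : ∀ x : ↥(upsilonSet k parent ∪ omegaSet k G T parent),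
      x ∈ l.support → x ≠ x0 → (x : Sym2 (Sym (Fin (v+1)) k) → ZMod 2) ε = 0 := by
    intro x hxS hxne
    have Px := hprop x
    have hW : ¬ ((if pflag x0 = true then k*v+1 else 0) + (pd x0).val
        + (Multiset.map Fin.val (pf x0)).sum
        < (if pflag x = true then k*v+1 else 0) + (pd x).val
        + (Multiset.map Fin.val (pf x)).sum) := not_lt.mpr (hx0max x hxS)
    rw [hrepr x]
    simp only [cartSquare, Pi.add_apply, edgeVec]
    rw [if_neg ?h1, if_neg ?h2, if_neg ?h3, if_neg ?h4]
    · norm_num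
    case h1 =>
      intro hEq
      exact hW (lemB hpar P0.1 P0.2.1 P0.2.2.1 P0.2.2.2.1 P0.2.2.2.2
        Px.1 Px.2.1 Px.2.2.1 Px.2.2.2.1 Px.2.2.2.2 (Or.inl (hEq.symm.trans hε)))
    case h2 =>
      intro hEq
      exact hW (lemB hpar P0.1 P0.2.1 P0.2.2.1 P0.2.2.2.1 P0.2.2.2.2
        Px.1 Px.2.1 Px.2.2.1 Px.2.2.2.1 Px.2.2.2.2 (Or.inr (Or.inl (hEq.symm.trans hε))))
    case h3 =>
      intro hEq
      have hsq := lemA parent P0.1 Px.1 P0.2.2.1 Px.2.2.1 (hEq.symm.trans hε)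
      have : (x : Sym2 (Sym (Fin (v+1)) k) → ZMod 2) = (x0 : Sym2 (Sym (Fin (v+1)) k) → ZMod 2) := by
        rw [hrepr x, hrepr x0, hsq]
      exact hxne (Subtype.ext this)
    case h4 =>
      intro hEq
      exact hW (lemB hpar P0.1 P0.2.1 P0.2.2.1 P0.2.2.2.1 P0.2.2.2.2
        Px.1 Px.2.1 Px.2.2.1 Px.2.2.2.1 Px.2.2.2.2 (Or.inr (Or.inr (hEq.symm.trans hε))))
  -- value of x0 at ε is 1
  have hval0 : (x0 : Sym2 (Sym (Fin (v+1)) k) → ZMod 2) ε = 1 := by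
    have hWirr : ∀ (p : Prop), ((if pflag x0 = true then k*v+1 else 0) + (pd x0).val
        + (Multiset.map Fin.val (pf x0)).sum
        < (if pflag x0 = true then k*v+1 else 0) + (pd x0).val
        + (Multiset.map Fin.val (pf x0)).sum) → p := fun p hlt => absurd hlt (lt_irrefl _)
    have g1 : ε ≠ s(symCons2 k (pa x0) (parent (pd x0)) (pf x0) (ph x0),
        symCons2 k (pb x0) (parent (pd x0)) (pf x0) (ph x0)) := by
      intro hEq
      exact hWirr _ (lemB hpar P0.1 P0.2.1 P0.2.2.1 P0.2.2.2.1 P0.2.2.2.2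
        P0.1 P0.2.1 P0.2.2.1 P0.2.2.2.1 P0.2.2.2.2 (Or.inl (hEq.symm.trans hε)))
    have g2 : ε ≠ s(symCons2 k (pb x0) (parent (pd x0)) (pf x0) (ph x0),
        symCons2 k (pb x0) (pd x0) (pf x0) (ph x0)) := by
      intro hEq
      exact hWirr _ (lemB hpar P0.1 P0.2.1 P0.2.2.1 P0.2.2.2.1 P0.2.2.2.2
        P0.1 P0.2.1 P0.2.2.1 P0.2.2.2.1 P0.2.2.2.2 (Or.inr (Or.inl (hEq.symm.trans hε))))
    have g4 : ε ≠ s(symCons2 k (pa x0) (pd x0) (pf x0) (ph x0),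
        symCons2 k (pa x0) (parent (pd x0)) (pf x0) (ph x0)) := by
      intro hEq
      exact hWirr _ (lemB hpar P0.1 P0.2.1 P0.2.2.1 P0.2.2.2.1 P0.2.2.2.2
        P0.1 P0.2.1 P0.2.2.1 P0.2.2.2.1 P0.2.2.2.2 (Or.inr (Or.inr (hEq.symm.trans hε))))
    rw [hrepr x0]
    simp only [cartSquare, Pi.add_apply, edgeVec]
    simp [g1, g2, g4]
    exact hε
  -- evaluate the dependence at ε
  rw [Finsupp.linearCombination_apply] at hl
  have hl2 := congrFun hl ε
  rw [Finsupp.sum, Finset.sum_apply] at hl2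
  have hsum : ∑ x ∈ l.support,
      (l x • (x : Sym2 (Sym (Fin (v+1)) k) → ZMod 2)) ε
      = (l x0 • (x0 : Sym2 (Sym (Fin (v+1)) k) → ZMod 2)) ε :=
    Finset.sum_eq_single_of_mem x0 hx0S
      (fun x hx hne' => by rw [Pi.smul_apply, hval x hx hne', smul_zero])
  rw [hsum, Pi.smul_apply, hval0, smul_eq_mul, mul_one] at hl2
  exact (Finsupp.mem_support_iff.mp hx0S) hl2
end

section
/- A cycle basis B = {B_1, ..., B_β} of a graph G is a minimum cycle basis if and only if every element C of the cycle space of G over F_2 can be written as a sum of basis elements B_i each satisfying |B_i| ≤ |C|, where |·| denotes the number of edges. -/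
open Finset
open scoped Classical

variable {V W : Type*}

/-- The length (number of edges) of an element of the `𝔽₂` edge space. -/
noncomputable def cycLen {α : Type*} (x : Sym2 α → ZMod 2) : ℕ :=
  Set.ncard {e | x e ≠ 0}

/-- `x` is (the edge-indicator vector of) a cycle of the graph `H`. -/
def IsCycleVec {α : Type*} (H : SimpleGraph α) (x : Sym2 α → ZMod 2) : Prop :=
  ∃ (a : α) (w : H.Walk a a), w.IsCycle ∧ x = fun e => if e ∈ w.edges then 1 else 0

/-- `B` is a cycle basis of `H`: a basis of the `𝔽₂` cycle space of `H`
consisting of cycles. -/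
def IsCycleBasis {α : Type*} [Fintype α] [DecidableEq α] (H : SimpleGraph α)
    (B : Finset (Sym2 α → ZMod 2)) : Prop :=
  (∀ x ∈ B, IsCycleVec H x)
    ∧ LinearIndependent (ZMod 2) ((↑) : ↥(B : Set (Sym2 α → ZMod 2)) → (Sym2 α → ZMod 2))
    ∧ Submodule.span (ZMod 2) (B : Set (Sym2 α → ZMod 2)) = cycleSpace H

/-- `B` is a minimum cycle basis (MCB) of `H`: a cycle basis minimizing the total
length `ℓ(B) = ∑_{C ∈ B} |C|` among all cycle bases. -/
noncomputable def basisLen {α : Type*} (B : Finset (Sym2 α → ZMod 2)) : ℕ :=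
  ∑ x ∈ B, cycLen x

/-- `B` is a minimum cycle basis of `H`. -/
def IsMCB {α : Type*} [Fintype α] [DecidableEq α] (H : SimpleGraph α)
    (B : Finset (Sym2 α → ZMod 2)) : Prop :=
  IsCycleBasis H B ∧ ∀ B' : Finset (Sym2 α → ZMod 2), IsCycleBasis H B' → basisLen B ≤ basisLen B' 

open scoped symmDiff

variable {α : Type*}

lemma vecAddSelf (x : Sym2 α → ZMod 2) : x + x = 0 := by
  funext e; exact CharTwo.add_self_eq_zero _

lemma zmod2_eq_one {a : ZMod 2} (h : a ≠ 0) : a = 1 := by revert h; revert a; decide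

lemma sum_symmDiff_vec [DecidableEq (Sym2 α → ZMod 2)] (S T : Finset (Sym2 α → ZMod 2)) :
    ∑ x ∈ S ∆ T, x = (∑ x ∈ S, x) + (∑ x ∈ T, x) := by
  classical
  rw [symmDiff_def, Finset.sup_eq_union, Finset.sum_union disjoint_sdiff_sdiff]
  have h1 : (∑ x ∈ S \ T, x) + (∑ x ∈ S ∩ T, x) = ∑ x ∈ S, x := by
    rw [← Finset.sdiff_inter_self_left S T]
    exact Finset.sum_sdiff Finset.inter_subset_left
  have h2 : (∑ x ∈ T \ S, x) + (∑ x ∈ T ∩ S, x) = ∑ x ∈ T, x := by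
    rw [← Finset.sdiff_inter_self_left T S]
    exact Finset.sum_sdiff Finset.inter_subset_left
  have h3 : (∑ x ∈ S ∩ T, x) + (∑ x ∈ T ∩ S, x) = 0 := by
    rw [Finset.inter_comm]; exact vecAddSelf _
  calc (∑ x ∈ S \ T, x) + (∑ x ∈ T \ S, x)
      = ((∑ x ∈ S \ T, x) + (∑ x ∈ S ∩ T, x)) + ((∑ x ∈ T \ S, x) + (∑ x ∈ T ∩ S, x))
        - ((∑ x ∈ S ∩ T, x) + (∑ x ∈ T ∩ S, x)) := by abel
    _ = (∑ x ∈ S, x) + (∑ x ∈ T, x) := by rw [h1, h2, h3]; abel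

lemma rep_exists {B : Finset (Sym2 α → ZMod 2)} {C : Sym2 α → ZMod 2}
    (h : C ∈ Submodule.span (ZMod 2) (B : Set (Sym2 α → ZMod 2))) :
    ∃ S ⊆ B, C = ∑ x ∈ S, x := by
  classical
  obtain ⟨f, -, hf⟩ := Submodule.mem_span_finset.mp h
  refine ⟨B.filter (fun i => f i = 1), Finset.filter_subset _ _, ?_⟩
  rw [← hf, ← Finset.sum_filter_add_sum_filter_not B (fun i => f i = 1)]
  have h1 : ∑ i ∈ B.filter (fun i => f i = 1), f i • i
      = ∑ i ∈ B.filter (fun i => f i = 1), i := by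
    refine Finset.sum_congr rfl fun i hi => ?_
    rw [(Finset.mem_filter.mp hi).2, one_smul]
  have h2 : ∑ i ∈ B.filter (fun i => ¬ f i = 1), f i • i = 0 := by
    refine Finset.sum_eq_zero fun i hi => ?_
    have : f i = 0 := by
      have := (Finset.mem_filter.mp hi).2
      revert this; generalize f i = a; revert a; decide
    rw [this, zero_smul]
  rw [h1, h2, add_zero]

lemma sum_eq_zero_iff_of_indep {B S : Finset (Sym2 α → ZMod 2)}
    (hB : LinearIndependent (ZMod 2) ((↑) : ↥(B : Set (Sym2 α → ZMod 2)) → (Sym2 α → ZMod 2)))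
    (hS : S ⊆ B) (h : ∑ x ∈ S, x = 0) : S = ∅ := by
  classical
  rw [linearIndependent_subtype_iff, linearIndepOn_iff] at hB
  set l : (Sym2 α → ZMod 2) →₀ ZMod 2 := ∑ x ∈ S, Finsupp.single x 1 with hl
  have hlapp : ∀ y ∈ S, l y = 1 := by
    intro y hy
    rw [hl, Finset.sum_apply']
    rw [Finset.sum_eq_single y (fun b _ hb => Finsupp.single_eq_of_ne' hb) (fun h' => absurd hy h')]
    simp
  have hsupp : l ∈ Finsupp.supported (ZMod 2) (ZMod 2) (B : Set (Sym2 α → ZMod 2)) := by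
    rw [Finsupp.mem_supported]
    intro y hy
    by_contra hyB
    have h0 : l y = 0 := by
      rw [hl, Finset.sum_apply']
      refine Finset.sum_eq_zero fun b hb => ?_
      refine Finsupp.single_eq_of_ne' fun hby => ?_
      exact hyB (hS (hby ▸ hb))
    exact (Finsupp.mem_support_iff.mp hy) h0
  have htot : Finsupp.linearCombination (ZMod 2) id l = 0 := by
    rw [hl, map_sum]
    simp only [Finsupp.linearCombination_single, one_smul, id]
    exact h
  have hl0 := hB l hsupp htot
  by_contra hSne
  obtain ⟨y, hy⟩ := Finset.nonempty_iff_ne_empty.mpr hSne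
  have := hlapp y hy
  rw [hl0] at this
  simp at this

lemma indep_of_sums {B : Finset (Sym2 α → ZMod 2)}
    (h : ∀ S ⊆ B, ∑ x ∈ S, x = 0 → S = ∅) :
    LinearIndependent (ZMod 2) ((↑) : ↥(B : Set (Sym2 α → ZMod 2)) → (Sym2 α → ZMod 2)) := by
  classical
  rw [linearIndependent_subtype_iff, linearIndepOn_iff]
  intro l hsupp htot
  have hSB : l.support ⊆ B := by
    intro y hy
    exact_mod_cast (Finsupp.mem_supported (ZMod 2) l).mp hsupp hy
  have hsum : ∑ x ∈ l.support, x = 0 := by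
    have : Finsupp.linearCombination (ZMod 2) id l = ∑ x ∈ l.support, l x • x := by
      rw [Finsupp.linearCombination_apply, Finsupp.sum]; rfl
    rw [this] at htot
    rw [← htot]
    refine Finset.sum_congr rfl fun x hx => ?_
    rw [zmod2_eq_one (Finsupp.mem_support_iff.mp hx), one_smul]
  have := h l.support hSB hsum
  exact Finsupp.support_eq_empty.mp this

lemma rep_unique {B S T : Finset (Sym2 α → ZMod 2)}
    (hB : LinearIndependent (ZMod 2) ((↑) : ↥(B : Set (Sym2 α → ZMod 2)) → (Sym2 α → ZMod 2)))
    (hS : S ⊆ B) (hT : T ⊆ B) (h : ∑ x ∈ S, x = ∑ x ∈ T, x) : S = T := by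
  classical
  have hsum : ∑ x ∈ S ∆ T, x = 0 := by
    rw [sum_symmDiff_vec, h, vecAddSelf]
  have hsub : S ∆ T ⊆ B := by
    intro y hy
    rcases Finset.mem_symmDiff.mp hy with ⟨h1, _⟩ | ⟨h1, _⟩
    · exact hS h1
    · exact hT h1
  have := sum_eq_zero_iff_of_indep hB hsub hsum
  exact symmDiff_eq_bot.mp this

section GraphLemmas

lemma boundary_apply [Fintype V] (G : SimpleGraph V) (x : Sym2 V → ZMod 2) (v : V) :
    boundaryMap G x v = ∑ e ∈ G.edgeFinset, (if v ∈ e then x e else 0) := rfl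

variable [Fintype V] [DecidableEq V]

lemma boundary_apply' (G : SimpleGraph V) (x : Sym2 V → ZMod 2) (v : V) :
    boundaryMap G x v = ∑ e ∈ G.edgeFinset, (if v ∈ e then x e else 0) := by
  rw [boundary_apply]
  apply Finset.sum_congr rfl
  intro e _
  congr 1

lemma even_cast_zmod2 {n : ℕ} (h : Even n) : (n : ZMod 2) = 0 := by
  obtain ⟨k, rfl⟩ := h
  push_cast
  exact CharTwo.add_self_eq_zero _

lemma cycleVec_mem_cycleSpace (G : SimpleGraph V) {x : Sym2 V → ZMod 2}
    (h : IsCycleVec G x) : x ∈ cycleSpace G := by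
  obtain ⟨a, w, hc, hxdef⟩ := h
  have hx1 : ∀ e, e ∈ w.edges → x e = 1 := by
    intro e he; rw [hxdef]; exact if_pos he
  have hx0 : ∀ e, e ∉ w.edges → x e = 0 := by
    intro e he; rw [hxdef]; exact if_neg he
  constructor
  · intro e he
    refine hx0 e fun hmem => he (w.edges_subset_edgeSet hmem)
  · simp only [SetLike.mem_coe, LinearMap.mem_ker]
    funext v
    rw [boundary_apply', Pi.zero_apply]
    have h1 : ∀ e ∈ G.edgeFinset,
        (if v ∈ e then x e else 0)
        = (if v ∈ e ∧ e ∈ w.edges then (1 : ZMod 2) else 0) := by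
      intro e _
      by_cases hv : v ∈ e
      · by_cases hw : e ∈ w.edges
        · rw [if_pos hv, hx1 e hw, if_pos ⟨hv, hw⟩]
        · rw [if_pos hv, hx0 e hw, if_neg (fun hh => hw hh.2)]
      · rw [if_neg hv, if_neg (fun hh => hv hh.1)]
    rw [Finset.sum_congr rfl h1, Finset.sum_boole]
    have hfe : G.edgeFinset.filter (fun e => v ∈ e ∧ e ∈ w.edges)
        = w.edges.toFinset.filter (fun e => v ∈ e) := by
      ext e
      simp only [Finset.mem_filter, List.mem_toFinset, SimpleGraph.mem_edgeFinset]
      constructor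
      · rintro ⟨_, h1, h2⟩; exact ⟨h2, h1⟩
      · rintro ⟨h1, h2⟩; exact ⟨w.edges_subset_edgeSet h1, h2, h1⟩
    rw [hfe]
    have hcount : (w.edges.toFinset.filter (fun e => v ∈ e)).card
        = w.edges.countP (fun e => decide (v ∈ e)) := by
      have h2 : (w.edges.toFinset.filter (fun e => v ∈ e))
          = (w.edges.filter (fun e => decide (v ∈ e))).toFinset := by
        ext e; simp
      rw [h2, List.card_toFinset, List.Nodup.dedup (hc.isTrail.edges_nodup.filter _),
        List.countP_eq_length_filter]
    rw [hcount]
    refine even_cast_zmod2 ?_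
    exact (hc.isTrail.even_countP_edges_iff v).mpr (fun h' => absurd rfl h')

lemma exists_cycleVec_subset (G : SimpleGraph V) {C : Sym2 V → ZMod 2}
    (hC : C ∈ cycleSpace G) (h0 : C ≠ 0) :
    ∃ D : Sym2 V → ZMod 2, IsCycleVec G D ∧ (∀ e, D e ≠ 0 → C e ≠ 0) ∧ (∃ e, D e ≠ 0) := by
  obtain ⟨hCedge, hCker⟩ := hC
  have hCG : ∀ e, C e ≠ 0 → e ∈ G.edgeSet := by
    intro e he
    by_contra h
    exact he (hCedge e h)
  set H : SimpleGraph V := SimpleGraph.fromEdgeSet {e | C e ≠ 0} with hH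
  have hHadj : ∀ u v, H.Adj u v ↔ C s(u, v) ≠ 0 := by
    intro u v
    rw [hH, SimpleGraph.fromEdgeSet_adj]
    constructor
    · rintro ⟨h1, _⟩; exact h1
    · intro h1
      exact ⟨h1, (G.ne_of_adj ((SimpleGraph.mem_edgeSet G).mp (hCG _ h1)))⟩
  have hHG : H ≤ G := by
    intro u v huv
    exact (SimpleGraph.mem_edgeSet G).mp (hCG _ ((hHadj u v).mp huv))
  -- even degrees in H
  have heven : ∀ v, Even (H.degree v) := by
    intro v
    have hbd : ∑ e ∈ G.edgeFinset, (if v ∈ e then C e else 0) = 0 := by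
      have h2 := congrFun (LinearMap.mem_ker.mp (SetLike.mem_coe.mp hCker)) v
      rw [boundary_apply', Pi.zero_apply] at h2
      exact h2
    have hsum : ∑ e ∈ G.edgeFinset, (if v ∈ e then C e else 0)
        = ((G.edgeFinset.filter (fun e => v ∈ e ∧ C e ≠ 0)).card : ZMod 2) := by
      rw [← Finset.sum_boole]
      refine Finset.sum_congr rfl fun e _ => ?_
      by_cases h1 : v ∈ e
      · by_cases h2 : C e = 0
        · rw [if_pos h1, if_neg (fun hh => hh.2 h2)]; exact h2
        · rw [if_pos h1, if_pos ⟨h1, h2⟩]; exact zmod2_eq_one h2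
      · rw [if_neg h1, if_neg (fun hh => h1 hh.1)]
    have hcard : G.edgeFinset.filter (fun e => v ∈ e ∧ C e ≠ 0) = H.incidenceFinset v := by
      ext e
      simp only [Finset.mem_filter, SimpleGraph.mem_edgeFinset,
        SimpleGraph.mem_incidenceFinset, SimpleGraph.incidenceSet]
      constructor
      · rintro ⟨h1, h2, h3⟩
        refine ⟨?_, h2⟩
        rw [hH, SimpleGraph.edgeSet_fromEdgeSet]
        exact ⟨h3, fun hd => G.not_isDiag_of_mem_edgeSet h1 hd⟩
      · rintro ⟨h1, h2⟩
        rw [hH, SimpleGraph.edgeSet_fromEdgeSet] at h1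
        exact ⟨hCG e h1.1, h2, h1.1⟩
    have hz : ((H.incidenceFinset v).card : ZMod 2) = 0 := by
      rw [← hcard, ← hsum]
      exact hbd
    rw [SimpleGraph.card_incidenceFinset_eq_degree] at hz
    rw [even_iff_two_dvd]
    exact (ZMod.natCast_eq_zero_iff _ 2).mp hz
  -- H has an edge
  obtain ⟨e0, he0⟩ : ∃ e, C e ≠ 0 := by
    by_contra h
    push_neg at h
    exact h0 (funext h)
  obtain ⟨a, b⟩ := e0
  have hab : H.Adj a b := (hHadj a b).mpr he0
  -- find a cycle in H
  have hcyc : ∃ (u : V) (c : H.Walk u u), c.IsCycle := by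
    by_contra hnc
    push_neg at hnc
    have key : ∀ n : ℕ, ∃ (x y : V) (p : H.Walk x y), p.IsPath ∧ p.length = n + 1 := by
      intro n
      induction n with
      | zero =>
        refine ⟨a, b, SimpleGraph.Walk.cons hab SimpleGraph.Walk.nil, ?_, rfl⟩
        simp [SimpleGraph.Walk.cons_isPath_iff, hab.ne]
      | succ n ih =>
        obtain ⟨x, y, p, hp, hl⟩ := ih
        cases p with
        | nil => simp at hl
        | @cons _ x' _ hadj q =>
          have hx'mem : x' ∈ H.neighborFinset x := by
            rw [SimpleGraph.mem_neighborFinset]; exact hadj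
          obtain ⟨w, hw, hwx'⟩ : ∃ w ∈ H.neighborFinset x, w ≠ x' := by
            by_contra hcon
            push_neg at hcon
            have hsing : H.neighborFinset x = {x'} := by
              apply Finset.eq_singleton_iff_unique_mem.mpr
              exact ⟨hx'mem, hcon⟩
            have heq := heven x
            rw [← SimpleGraph.card_neighborFinset_eq_degree, hsing] at heq
            simp at heq
          have hadjw : H.Adj x w := (SimpleGraph.mem_neighborFinset _ _ _).mp hw
          by_cases hmem : w ∈ (SimpleGraph.Walk.cons hadj q).support
          · exfalso
            have hwx : w ≠ x := hadjw.ne'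
            set p := SimpleGraph.Walk.cons hadj q with hpdef
            have hcyc' : (SimpleGraph.Walk.cons hadjw.symm (p.takeUntil w hmem)).IsCycle := by
              rw [SimpleGraph.Walk.cons_isCycle_iff]
              refine ⟨hp.takeUntil hmem, fun he => ?_⟩
              have hsub := SimpleGraph.Walk.edges_takeUntil_subset p hmem
              have he' : s(w, x) ∈ p.edges := hsub he
              rw [hpdef, SimpleGraph.Walk.edges_cons] at he'
              rcases List.mem_cons.mp he' with h1 | h1
              · rw [Sym2.eq_iff] at h1
                rcases h1 with ⟨h2, _⟩ | ⟨h2, _⟩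
                · exact hwx h2
                · exact hwx' h2
              · have hxq : x ∈ q.support := SimpleGraph.Walk.snd_mem_support_of_mem_edges q h1
                rw [hpdef, SimpleGraph.Walk.cons_isPath_iff] at hp
                exact hp.2 hxq
            exact hnc w _ hcyc'
          · refine ⟨w, y, SimpleGraph.Walk.cons hadjw.symm (SimpleGraph.Walk.cons hadj q), ?_, ?_⟩
            · rw [SimpleGraph.Walk.cons_isPath_iff]
              exact ⟨hp, hmem⟩
            · simp [hl]
    obtain ⟨x, y, p, hp, hl⟩ := key (Fintype.card V)
    have := hp.length_lt
    omega
  obtain ⟨u, c, hc⟩ := hcyc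
  have htrans : ∀ e ∈ c.edges, e ∈ G.edgeSet := by
    intro e he
    exact SimpleGraph.edgeSet_mono hHG (c.edges_subset_edgeSet he)
  set D : Sym2 V → ZMod 2 := fun e => if e ∈ c.edges then 1 else 0 with hD
  have hD1 : ∀ e, e ∈ c.edges → D e = 1 := by
    intro e he; rw [hD]; exact if_pos he
  have hD0 : ∀ e, e ∉ c.edges → D e = 0 := by
    intro e he; rw [hD]; exact if_neg he
  refine ⟨D, ⟨u, c.transfer G htrans, hc.transfer htrans, ?_⟩, ?_, ?_⟩
  · funext e
    rw [hD, SimpleGraph.Walk.edges_transfer]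
    show (if e ∈ c.edges then (1 : ZMod 2) else 0) = _
    congr 1
  · intro e he
    by_cases h : e ∈ c.edges
    · have hm := c.edges_subset_edgeSet h
      rw [hH, SimpleGraph.edgeSet_fromEdgeSet] at hm
      exact hm.1
    · exact absurd (hD0 e h) he
  · have hne : c.edges ≠ [] := by
      have h3 := hc.three_le_length
      intro h
      have h4 := c.length_edges
      rw [h] at h4
      simp at h4
      omega
    obtain ⟨e, he⟩ := List.exists_mem_of_ne_nil _ hne
    exact ⟨e, by rw [hD1 e he]; exact one_ne_zero⟩

lemma cycLen_lt_bound (x : Sym2 V → ZMod 2) :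
    cycLen x < Fintype.card (Sym2 V) + 1 := by
  have h1 : cycLen x ≤ Fintype.card (Sym2 V) := by
    rw [cycLen]
    calc Set.ncard {e | x e ≠ 0} ≤ (Set.univ : Set (Sym2 V)).ncard :=
          Set.ncard_le_ncard (Set.subset_univ _) Set.finite_univ
      _ = Fintype.card (Sym2 V) := by rw [Set.ncard_univ, Nat.card_eq_fintype_card]
  omega

lemma cycLen_zero : cycLen (0 : Sym2 V → ZMod 2) = 0 := by
  have h : {e : Sym2 V | (0 : Sym2 V → ZMod 2) e ≠ 0} = ∅ := by
    ext e; simp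
  rw [cycLen, h, Set.ncard_empty]

lemma key_rep (G : SimpleGraph V) (B : Finset (Sym2 V → ZMod 2))
    (hB : IsCycleBasis G B) :
    ∀ n (C : Sym2 V → ZMod 2), C ∈ cycleSpace G → cycLen C ≤ n →
    ∀ S, S ⊆ B → C = ∑ y ∈ S, y → ∀ x ∈ S,
    ∃ D SD, IsCycleVec G D ∧ cycLen D ≤ cycLen C ∧ SD ⊆ B ∧ D = ∑ y ∈ SD, y ∧ x ∈ SD := by
  intro n
  induction n with
  | zero =>
    intro C hC hlen S hS hsum x hx
    exfalso
    have hC0 : C = 0 := by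
      have h1 : {e | C e ≠ 0} = ∅ := by
        rw [← Set.ncard_eq_zero (Set.toFinite _)]
        rw [cycLen] at hlen
        omega
      funext e
      by_contra h
      have : e ∈ {e | C e ≠ 0} := h
      rw [h1] at this
      exact this
    have hSe : S = ∅ := sum_eq_zero_iff_of_indep hB.2.1 hS (by rw [← hsum, hC0])
    rw [hSe] at hx
    exact absurd hx (Finset.notMem_empty x)
  | succ n ih =>
    intro C hC hlen S hS hsum x hx
    by_cases hsmall : cycLen C ≤ n
    · exact ih C hC hsmall S hS hsum x hx
    · have hC0 : C ≠ 0 := by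
        intro h
        rw [h, cycLen_zero] at hsmall
        omega
      obtain ⟨D0, hD0cyc, hD0sub, e1, he1⟩ := exists_cycleVec_subset G hC hC0
      have hD0space : D0 ∈ cycleSpace G := cycleVec_mem_cycleSpace G hD0cyc
      have hD0span : D0 ∈ Submodule.span (ZMod 2) (B : Set (Sym2 V → ZMod 2)) := by
        rw [hB.2.2]; exact hD0space
      obtain ⟨S0, hS0B, hS0sum⟩ := rep_exists hD0span
      have hsubset : {e | D0 e ≠ 0} ⊆ {e | C e ≠ 0} := fun e he => hD0sub e he
      have hlenD0 : cycLen D0 ≤ cycLen C :=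
        Set.ncard_le_ncard hsubset (Set.toFinite _)
      by_cases hxS0 : x ∈ S0
      · exact ⟨D0, S0, hD0cyc, hlenD0, hS0B, hS0sum, hxS0⟩
      · have hC'space : C + D0 ∈ cycleSpace G := add_mem hC hD0space
        have hsub' : {e | (C + D0) e ≠ 0} ⊆ {e | C e ≠ 0} := by
          intro e he
          simp only [Set.mem_setOf_eq, Pi.add_apply] at he ⊢
          intro hCe
          have hDe : D0 e = 0 := by
            by_contra hD
            exact (hD0sub e hD) hCe
          rw [hCe, hDe, add_zero] at he
          exact he rfl
        have he1' : e1 ∉ {e | (C + D0) e ≠ 0} := by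
          simp only [Set.mem_setOf_eq, Pi.add_apply, not_not]
          rw [zmod2_eq_one he1, zmod2_eq_one (hD0sub e1 he1)]
          exact CharTwo.add_self_eq_zero _
        have he1C : e1 ∈ {e | C e ≠ 0} := hD0sub e1 he1
        have hssub : {e | (C + D0) e ≠ 0} ⊂ {e | C e ≠ 0} :=
          ⟨hsub', fun hcon => he1' (hcon he1C)⟩
        have hlt : cycLen (C + D0) < cycLen C :=
          Set.ncard_lt_ncard hssub (Set.toFinite _)
        have hlen' : cycLen (C + D0) ≤ n := by omega
        have hsum' : C + D0 = ∑ y ∈ S ∆ S0, y := by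
          rw [sum_symmDiff_vec, ← hsum, ← hS0sum]
        have hSS0 : S ∆ S0 ⊆ B := by
          intro y hy
          rcases Finset.mem_symmDiff.mp hy with ⟨h1, _⟩ | ⟨h1, _⟩
          · exact hS h1
          · exact hS0B h1
        have hx' : x ∈ S ∆ S0 := Finset.mem_symmDiff.mpr (Or.inl ⟨hx, hxS0⟩)
        obtain ⟨D, SD, h1, h2, h3, h4, h5⟩ := ih (C + D0) hC'space hlen' _ hSS0 hsum' x hx'
        exact ⟨D, SD, h1, le_trans h2 (le_of_lt hlt), h3, h4, h5⟩

end GraphLemmas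


/-- A cycle basis `B` of a graph `G` is a minimum cycle basis if and only if every
element `C` of the cycle space of `G` over `𝔽₂` is a sum of basis elements each of
length at most `|C|`. -/
theorem stmt_19 [Fintype V] [DecidableEq V] (G : SimpleGraph V)
    (B : Finset (Sym2 V → ZMod 2)) (hB : IsCycleBasis G B) :
    IsMCB G B ↔
      ∀ C ∈ cycleSpace G, ∃ S ⊆ B, C = (∑ x ∈ S, x) ∧ ∀ x ∈ S, cycLen x ≤ cycLen C := by
  constructor
  · rintro ⟨hBB, hmin⟩ C hCspace
    have hCspan : C ∈ Submodule.span (ZMod 2) (B : Set (Sym2 V → ZMod 2)) := by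
      rw [hB.2.2]; exact hCspace
    obtain ⟨S, hS, hsum⟩ := rep_exists hCspan
    refine ⟨S, hS, hsum, ?_⟩
    by_contra hbad
    push_neg at hbad
    obtain ⟨x, hxS, hxlen⟩ := hbad
    obtain ⟨D, SD, hDcyc, hDlen, hSDB, hDsum, hxSD⟩ :=
      key_rep G B hB (cycLen C) C hCspace le_rfl S hS hsum x hxS
    have hxB : x ∈ B := hS hxS
    have hDltx : cycLen D < cycLen x := lt_of_le_of_lt hDlen hxlen
    have hDnex : D ≠ x := fun h => by rw [h] at hDltx; exact lt_irrefl _ hDltx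
    have hDspace : D ∈ cycleSpace G := cycleVec_mem_cycleSpace G hDcyc
    have hDnotB : D ∉ B := by
      intro hDB
      have hsing : ({D} : Finset (Sym2 V → ZMod 2)) ⊆ B := by
        intro y hy; rw [Finset.mem_singleton.mp hy]; exact hDB
      have heq : SD = {D} := rep_unique hB.2.1 hSDB hsing
        (by rw [← hDsum, Finset.sum_singleton])
      rw [heq] at hxSD
      exact hDnex (Finset.mem_singleton.mp hxSD).symm
    have hDnotBe : D ∉ B.erase x := fun h => hDnotB (Finset.mem_of_mem_erase h)
    set B2 := insert D (B.erase x) with hB2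
    have hxspan : x ∈ Submodule.span (ZMod 2) (B2 : Set (Sym2 V → ZMod 2)) := by
      have h1e : x + ∑ y ∈ SD.erase x, y = ∑ y ∈ SD, y :=
        Finset.add_sum_erase SD (fun y => y) hxSD
      have h1 : D = x + ∑ y ∈ SD.erase x, y := by rw [h1e]; exact hDsum
      have hxrw : x = D + ∑ y ∈ SD.erase x, y := by
        rw [h1, add_assoc, vecAddSelf, add_zero]
      rw [hxrw]
      refine Submodule.add_mem _ (Submodule.subset_span (by simp [hB2])) ?_
      refine Submodule.sum_mem _ fun y hy => Submodule.subset_span ?_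
      have hyB : y ∈ B := hSDB (Finset.mem_of_mem_erase hy)
      have hynex : y ≠ x := Finset.ne_of_mem_erase hy
      simp [hB2, Finset.mem_erase, hynex, hyB]
    have hB2basis : IsCycleBasis G B2 := by
      refine ⟨?_, ?_, ?_⟩
      · intro y hy
        rcases Finset.mem_insert.mp hy with rfl | hy'
        · exact hDcyc
        · exact hB.1 y (Finset.mem_of_mem_erase hy')
      · refine indep_of_sums fun T hT hTsum => ?_
        by_cases hDT : D ∈ T
        · exfalso
          have hTD : T.erase D ⊆ B.erase x := by
            intro y hy
            have hyB2 := hT (Finset.mem_of_mem_erase hy)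
            rcases Finset.mem_insert.mp hyB2 with h | h
            · exact absurd h (Finset.ne_of_mem_erase hy)
            · exact h
          have hDeq : D = ∑ y ∈ T.erase D, y := by
            have h5 := Finset.add_sum_erase T id hDT
            simp only [id] at h5
            rw [hTsum] at h5
            have h6 := congrArg (fun z => D + z) h5
            rw [← add_assoc, vecAddSelf, zero_add, add_zero] at h6
            exact h6.symm
          have heq : SD = T.erase D := rep_unique hB.2.1 hSDB
            (hTD.trans (Finset.erase_subset _ _)) (by rw [← hDsum, ← hDeq])
          have hxe : x ∈ B.erase x := hTD (heq ▸ hxSD)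
          exact (Finset.ne_of_mem_erase hxe) rfl
        · have hTB : T ⊆ B := by
            intro y hy
            rcases Finset.mem_insert.mp (hT hy) with h | h
            · exact absurd (h ▸ hy) hDT
            · exact Finset.mem_of_mem_erase h
          exact sum_eq_zero_iff_of_indep hB.2.1 hTB hTsum
      · apply le_antisymm
        · rw [Submodule.span_le]
          intro y hy
          have hy' : y ∈ B2 := by exact_mod_cast hy
          rcases Finset.mem_insert.mp hy' with rfl | h
          · exact hDspace
          · rw [← hB.2.2]
            exact Submodule.subset_span (by exact_mod_cast Finset.mem_of_mem_erase h)
        · rw [← hB.2.2, Submodule.span_le]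
          intro y hy
          have hyB : y ∈ B := by exact_mod_cast hy
          by_cases hyx : y = x
          · rw [hyx]; exact hxspan
          · exact Submodule.subset_span (by simp [hB2, Finset.mem_erase, hyx, hyB])
    have hlt : basisLen B2 < basisLen B := by
      have hb2 : basisLen B2 = cycLen D + ∑ y ∈ B.erase x, cycLen y := by
        rw [hB2, basisLen, Finset.sum_insert hDnotBe]
      have hb : basisLen B = cycLen x + ∑ y ∈ B.erase x, cycLen y :=
        (Finset.add_sum_erase B cycLen hxB).symm
      rw [hb2, hb]
      exact Nat.add_lt_add_right hDltx _
    exact absurd (hmin B2 hB2basis) (Nat.not_le.mpr hlt)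
  · intro hyp
    refine ⟨hB, ?_⟩
    intro B' hB'
    have hcard_eq : B.card = B'.card := by
      have h1 : Module.finrank (ZMod 2) (cycleSpace G) = B.card := by
        rw [← hB.2.2]; exact finrank_span_finset_eq_card hB.2.1
      have h2 : Module.finrank (ZMod 2) (cycleSpace G) = B'.card := by
        rw [← hB'.2.2]; exact finrank_span_finset_eq_card hB'.2.1
      omega
    have hcardk : ∀ k, (B'.filter (fun c => cycLen c ≤ k)).card
        ≤ (B.filter (fun c => cycLen c ≤ k)).card := by
      intro k
      have hind : LinearIndependent (ZMod 2)
          ((↑) : ↥((B'.filter (fun c => cycLen c ≤ k) : Finset (Sym2 V → ZMod 2)) :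
            Set (Sym2 V → ZMod 2)) → (Sym2 V → ZMod 2)) := by
        refine linearIndependent_subtype_iff.mpr (LinearIndepOn.mono (linearIndependent_subtype_iff.mp hB'.2.1) ?_)
        intro y hy
        have : y ∈ B'.filter (fun c => cycLen c ≤ k) := by exact_mod_cast hy
        exact_mod_cast Finset.filter_subset _ _ this
      have hspan : Submodule.span (ZMod 2)
            ((B'.filter (fun c => cycLen c ≤ k) : Finset (Sym2 V → ZMod 2)) :
              Set (Sym2 V → ZMod 2))
          ≤ Submodule.span (ZMod 2)
            ((B.filter (fun c => cycLen c ≤ k) : Finset (Sym2 V → ZMod 2)) :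
              Set (Sym2 V → ZMod 2)) := by
        rw [Submodule.span_le]
        intro c hc
        have hc' : c ∈ B'.filter (fun c => cycLen c ≤ k) := by exact_mod_cast hc
        obtain ⟨hcB', hck⟩ := Finset.mem_filter.mp hc'
        have hcspace : c ∈ cycleSpace G := by
          rw [← hB'.2.2]
          exact Submodule.subset_span (by exact_mod_cast hcB')
        obtain ⟨S, hSB, hsum, hlen⟩ := hyp c hcspace
        rw [hsum]
        refine Submodule.sum_mem _ fun y hy => Submodule.subset_span ?_
        have : y ∈ B.filter (fun c => cycLen c ≤ k) :=
          Finset.mem_filter.mpr ⟨hSB hy, le_trans (hlen y hy) hck⟩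
        exact_mod_cast this
      calc (B'.filter (fun c => cycLen c ≤ k)).card
          = Module.finrank (ZMod 2) (Submodule.span (ZMod 2)
              ((B'.filter (fun c => cycLen c ≤ k) : Finset (Sym2 V → ZMod 2)) :
                Set (Sym2 V → ZMod 2))) := (finrank_span_finset_eq_card hind).symm
        _ ≤ Module.finrank (ZMod 2) (Submodule.span (ZMod 2)
              ((B.filter (fun c => cycLen c ≤ k) : Finset (Sym2 V → ZMod 2)) :
                Set (Sym2 V → ZMod 2))) := Submodule.finrank_mono hspan
        _ ≤ (B.filter (fun c => cycLen c ≤ k)).card := by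
            have h := finrank_span_finset_le_card
              (R := ZMod 2) (B.filter (fun c => cycLen c ≤ k))
            rwa [Set.finrank] at h
    set N := Fintype.card (Sym2 V) + 1 with hN
    have hsumid : ∀ A : Finset (Sym2 V → ZMod 2),
        basisLen A = ∑ k ∈ Finset.range N, (A.filter (fun c => ¬ cycLen c ≤ k)).card := by
      intro A
      rw [basisLen]
      have h1 : ∀ x ∈ A, cycLen x
          = ∑ k ∈ Finset.range N, (if ¬ cycLen x ≤ k then 1 else 0) := by
        intro x _
        have hb : cycLen x < N := cycLen_lt_bound x
        have h2 : (Finset.range N).filter (fun k => ¬ cycLen x ≤ k)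
            = Finset.range (cycLen x) := by
          ext k
          simp only [Finset.mem_filter, Finset.mem_range, not_le]
          omega
        rw [← Finset.sum_filter, h2, Finset.sum_const, smul_eq_mul, mul_one, Finset.card_range]
      rw [Finset.sum_congr rfl h1, Finset.sum_comm]
      refine Finset.sum_congr rfl fun k _ => ?_
      rw [← Finset.sum_filter, Finset.sum_const, smul_eq_mul, mul_one]
    rw [hsumid B, hsumid B']
    refine Finset.sum_le_sum fun k _ => ?_
    have h1 := hcardk k
    have h2 := Finset.card_filter_add_card_filter_not
      (s := B) (p := fun c => cycLen c ≤ k)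
    have h3 := Finset.card_filter_add_card_filter_not
      (s := B') (p := fun c => cycLen c ≤ k)
    omega
end
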